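/- arXiv:1705.03837 — 3 statements merged into one kernel-verified Lean document; each statement's English description precedes it below -/
import Mathlib

section
/- Let X_1, X_2, ... be i.i.d. real-valued random variables with E[X_1] = 0, Var(X_1) = 1, and satisfying Cramér's condition. Then for any sequence (a_n) of positive reals with a_n → ∞ and a_n/√n → 0 as n → ∞, the sequence of random variables (1/(a_n √n)) Σ_{i=1}^n X_i obeys a moderate deviation principle with speed a_n² and good rate function I(x) = x²/2. -/
open MeasureTheory ProbabilityTheory Filter Set

noncomputable section

/-- A family of real-valued random variables `Y` on `(Ω, μ)` indexed along a filter `l`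
obeys a large deviation principle with speed `v` and good rate function `I`. -/
structure HasLDP {Ω : Type*} [MeasurableSpace Ω] (μ : Measure Ω)
    {ι : Type*} (l : Filter ι) (Y : ι → Ω → ℝ) (v : ι → ℝ) (I : ℝ → EReal) : Prop where
  nonneg : ∀ x, 0 ≤ I x
  compact_levels : ∀ L : ℝ, IsCompact {x : ℝ | I x ≤ (L : EReal)}
  lower_bound : ∀ G : Set ℝ, IsOpen G →
    -(⨅ x ∈ G, I x) ≤
      l.liminf fun n => (((v n)⁻¹ : ℝ) : EReal) * ENNReal.log (μ {ω | Y n ω ∈ G})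
  upper_bound : ∀ A : Set ℝ, IsClosed A →
    l.limsup (fun n => (((v n)⁻¹ : ℝ) : EReal) * ENNReal.log (μ {ω | Y n ω ∈ A})) ≤
      -(⨅ x ∈ A, I x)

namespace MDPAux

open Real

section Taylor

lemma abs_le_abs_of_uIoc {x v : ℝ} (hx : x ∈ Set.uIoc (0:ℝ) v) : |x| ≤ |v| := by
  rcases hx with ⟨h1, h2⟩
  rw [abs_le]
  constructor
  · calc -|v| ≤ min 0 v := by
          rcases le_total 0 v with h | h <;>
            simp only [min_eq_left, min_eq_right, h] <;> [linarith [abs_nonneg v]; linarith [neg_abs_le v]]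
    _ ≤ x := h1.le
  · calc x ≤ max 0 v := h2
    _ ≤ |v| := by
        rcases le_total 0 v with h | h <;>
          simp only [max_eq_right, max_eq_left, h] <;> [exact le_abs_self v; exact abs_nonneg v]

lemma taylor1 (v : ℝ) : |Real.exp v - 1| ≤ |v| * Real.exp |v| := by
  have h : Real.exp v - 1 = ∫ s in (0:ℝ)..v, Real.exp s := by
    rw [integral_exp, Real.exp_zero]
  rw [h, ← Real.norm_eq_abs]
  have hb : ∀ x ∈ Set.uIoc (0:ℝ) v, ‖Real.exp x‖ ≤ Real.exp |v| := by
    intro x hx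
    rw [Real.norm_eq_abs, abs_of_pos (Real.exp_pos _)]
    exact Real.exp_le_exp.2 ((le_abs_self x).trans (abs_le_abs_of_uIoc hx))
  calc ‖∫ s in (0:ℝ)..v, Real.exp s‖ ≤ Real.exp |v| * |v - 0| :=
    intervalIntegral.norm_integral_le_of_norm_le_const hb
  _ = |v| * Real.exp |v| := by rw [sub_zero, mul_comm]

lemma taylor2 (v : ℝ) : |Real.exp v - 1 - v| ≤ v ^ 2 * Real.exp |v| := by
  have h : Real.exp v - 1 - v = ∫ s in (0:ℝ)..v, (Real.exp s - 1) := by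
    rw [intervalIntegral.integral_sub intervalIntegral.intervalIntegrable_exp
      intervalIntegrable_const, integral_exp, intervalIntegral.integral_const, Real.exp_zero]
    simp
  rw [h, ← Real.norm_eq_abs]
  have hb : ∀ x ∈ Set.uIoc (0:ℝ) v, ‖Real.exp x - 1‖ ≤ |v| * Real.exp |v| := by
    intro x hx
    have hxa : |x| ≤ |v| := abs_le_abs_of_uIoc hx
    calc ‖Real.exp x - 1‖ ≤ |x| * Real.exp |x| := taylor1 x
    _ ≤ |v| * Real.exp |v| :=
      mul_le_mul hxa (Real.exp_le_exp.2 hxa) (Real.exp_pos _).le (abs_nonneg _)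
  calc ‖∫ s in (0:ℝ)..v, (Real.exp s - 1)‖ ≤ (|v| * Real.exp |v|) * |v - 0| :=
    intervalIntegral.norm_integral_le_of_norm_le_const hb
  _ = v ^ 2 * Real.exp |v| := by
    rw [sub_zero, show |v| * Real.exp |v| * |v| = |v| ^ 2 * Real.exp |v| by ring, sq_abs]

lemma taylor3 (v : ℝ) : |Real.exp v - 1 - v - v ^ 2 / 2| ≤ |v| ^ 3 * Real.exp |v| := by
  have h : Real.exp v - 1 - v - v ^ 2 / 2 = ∫ s in (0:ℝ)..v, (Real.exp s - 1 - s) := by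
    rw [intervalIntegral.integral_sub (intervalIntegral.intervalIntegrable_exp.sub
      intervalIntegrable_const) intervalIntegral.intervalIntegrable_id,
      intervalIntegral.integral_sub intervalIntegral.intervalIntegrable_exp
      intervalIntegrable_const, integral_exp, intervalIntegral.integral_const, integral_id,
      Real.exp_zero]
    simp only [smul_eq_mul, mul_one]
    ring
  rw [h, ← Real.norm_eq_abs]
  have hb : ∀ x ∈ Set.uIoc (0:ℝ) v, ‖Real.exp x - 1 - x‖ ≤ v ^ 2 * Real.exp |v| := by
    intro x hx
    have hxa : |x| ≤ |v| := abs_le_abs_of_uIoc hx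
    calc ‖Real.exp x - 1 - x‖ ≤ x ^ 2 * Real.exp |x| := taylor2 x
    _ ≤ v ^ 2 * Real.exp |v| := by
      apply mul_le_mul ?_ (Real.exp_le_exp.2 hxa) (Real.exp_pos _).le (sq_nonneg _)
      rw [← sq_abs x, ← sq_abs v]
      exact pow_le_pow_left₀ (abs_nonneg _) hxa 2
  calc ‖∫ s in (0:ℝ)..v, (Real.exp s - 1 - s)‖ ≤ (v ^ 2 * Real.exp |v|) * |v - 0| :=
    intervalIntegral.norm_integral_le_of_norm_le_const hb
  _ = |v| ^ 3 * Real.exp |v| := by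
    rw [sub_zero, ← sq_abs v]
    ring

lemma pow_le_exp_aux (c : ℝ) (hc : 0 < c) (k : ℕ) :
    ∃ C > (0:ℝ), ∀ r : ℝ, 0 ≤ r → r ^ k ≤ C * Real.exp (c * r) := by
  refine ⟨(k.factorial : ℝ) / c ^ k, by positivity, fun r hr => ?_⟩
  have h : (c * r) ^ k / (k.factorial : ℝ) ≤ Real.exp (c * r) := by
    calc (c * r) ^ k / (k.factorial : ℝ)
        ≤ ∑ i ∈ Finset.range (k + 1), (c * r) ^ i / (i.factorial : ℝ) :=
          Finset.single_le_sum (f := fun i => (c*r)^i / (i.factorial : ℝ))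
            (fun i _ => by positivity) (Finset.self_mem_range_succ k)
    _ ≤ Real.exp (c * r) := Real.sum_le_exp_of_nonneg (by positivity) _
  have hfac : (0:ℝ) < (k.factorial : ℝ) := by positivity
  rw [div_le_iff₀ hfac, mul_pow] at h
  rw [div_mul_eq_mul_div, le_div_iff₀ (pow_pos hc k)]
  calc r ^ k * c ^ k = c ^ k * r ^ k := mul_comm _ _
  _ ≤ Real.exp (c * r) * (k.factorial : ℝ) := h
  _ = (k.factorial : ℝ) * Real.exp (c * r) := mul_comm _ _

end Taylor

section MgfExpansion

variable {Ω : Type*} [MeasurableSpace Ω] {μ : Measure Ω} [IsProbabilityMeasure μ]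
  {Z : Ω → ℝ} {D : ℝ}

lemma int_exp_abs (hZ : Measurable Z) (hD : 0 < D)
    (hint : ∀ l : ℝ, |l| < D → Integrable (fun ω => Real.exp (l * Z ω)) μ)
    {c : ℝ} (hc0 : 0 ≤ c) (hcD : c < D) :
    Integrable (fun ω => Real.exp (c * |Z ω|)) μ := by
  have h1 : Integrable (fun ω => Real.exp (c * Z ω) + Real.exp (-c * Z ω)) μ :=
    (hint c (by rwa [abs_of_nonneg hc0])).add (hint (-c) (by rwa [abs_neg, abs_of_nonneg hc0]))
  refine h1.mono' ((hZ.abs.const_mul c).exp.aestronglyMeasurable) (ae_of_all _ fun ω => ?_)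
  rw [Real.norm_eq_abs, abs_of_pos (Real.exp_pos _)]
  rcases le_total 0 (Z ω) with h | h
  · rw [abs_of_nonneg h]
    have : 0 ≤ Real.exp (-c * Z ω) := (Real.exp_pos _).le
    linarith
  · rw [abs_of_nonpos h, show c * -Z ω = -c * Z ω by ring]
    have : 0 ≤ Real.exp (c * Z ω) := (Real.exp_pos _).le
    linarith

lemma int_pow_exp (hZ : Measurable Z) (hD : 0 < D)
    (hint : ∀ l : ℝ, |l| < D → Integrable (fun ω => Real.exp (l * Z ω)) μ)
    (k : ℕ) {c : ℝ} (hc0 : 0 ≤ c) (hcD : c < D / 2) :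
    Integrable (fun ω => |Z ω| ^ k * Real.exp (c * |Z ω|)) μ := by
  set ε := (D - c) / 2 with hε
  have hε0 : 0 < ε := by rw [hε]; linarith
  obtain ⟨C, hC0, hC⟩ := pow_le_exp_aux ε hε0 k
  have hsum : Integrable (fun ω => C * Real.exp ((c + ε) * |Z ω|)) μ :=
    (int_exp_abs hZ hD hint (by positivity) (by rw [hε]; linarith)).const_mul C
  refine hsum.mono' (((hZ.abs.pow_const k).mul ((hZ.abs.const_mul c).exp)).aestronglyMeasurable)
    (ae_of_all _ fun ω => ?_)
  rw [Real.norm_eq_abs, abs_of_nonneg (by positivity)]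
  calc |Z ω| ^ k * Real.exp (c * |Z ω|) ≤ (C * Real.exp (ε * |Z ω|)) * Real.exp (c * |Z ω|) := by
        apply mul_le_mul_of_nonneg_right (hC _ (abs_nonneg _)) (Real.exp_pos _).le
  _ = C * Real.exp ((c + ε) * |Z ω|) := by rw [mul_assoc, ← Real.exp_add]; ring_nf

lemma int_Z (hZ : Measurable Z) (hD : 0 < D)
    (hint : ∀ l : ℝ, |l| < D → Integrable (fun ω => Real.exp (l * Z ω)) μ) :
    Integrable Z μ := by
  have h := int_pow_exp hZ hD hint 1 le_rfl (by linarith)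
  simp only [pow_one, zero_mul, Real.exp_zero, mul_one] at h
  exact h.mono' hZ.aestronglyMeasurable (ae_of_all _ fun ω => by rw [Real.norm_eq_abs])

lemma int_Zsq (hZ : Measurable Z) (hD : 0 < D)
    (hint : ∀ l : ℝ, |l| < D → Integrable (fun ω => Real.exp (l * Z ω)) μ) :
    Integrable (fun ω => Z ω ^ 2) μ := by
  have h := int_pow_exp hZ hD hint 2 le_rfl (by linarith)
  simp only [zero_mul, Real.exp_zero, mul_one, sq_abs] at h
  exact h

/-- Second order expansion of the mgf near `0`. -/
lemma mgf_expansion (hZ : Measurable Z) (hD : 0 < D)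
    (hint : ∀ l : ℝ, |l| < D → Integrable (fun ω => Real.exp (l * Z ω)) μ)
    (hmean : μ[Z] = 0) (h2 : μ[fun ω => Z ω ^ 2] = 1) :
    ∃ K ≥ (0:ℝ), ∀ u : ℝ, |u| ≤ D / 4 →
      |mgf Z μ u - 1 - u ^ 2 / 2| ≤ K * |u| ^ 3 := by
  have hKint : Integrable (fun ω => |Z ω| ^ 3 * Real.exp (D / 4 * |Z ω|)) μ :=
    int_pow_exp hZ hD hint 3 (by positivity) (by linarith)
  refine ⟨∫ ω, |Z ω| ^ 3 * Real.exp (D / 4 * |Z ω|) ∂μ,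
    integral_nonneg fun ω => by positivity, fun u hu => ?_⟩
  have huD : |u| < D := by linarith [hu, hD]
  have hintu : Integrable (fun ω => Real.exp (u * Z ω)) μ := hint u huD
  have hZ1 : Integrable Z μ := int_Z hZ hD hint
  have hZ2 : Integrable (fun ω => Z ω ^ 2) μ := int_Zsq hZ hD hint
  have hA : Integrable (fun ω => Real.exp (u * Z ω) - 1) μ := by
    exact hintu.sub (integrable_const 1)
  have hB : Integrable (fun ω => Real.exp (u * Z ω) - 1 - u * Z ω) μ := by
    exact hA.sub (hZ1.const_mul u)
  have hC : Integrable (fun ω => u ^ 2 * Z ω ^ 2 / 2) μ := by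
    exact (hZ2.const_mul (u ^ 2)).div_const 2
  have hD' : Integrable (fun ω => Real.exp (u * Z ω) - 1 - u * Z ω - u ^ 2 * Z ω ^ 2 / 2) μ := by
    exact hB.sub hC
  have key : mgf Z μ u - 1 - u ^ 2 / 2
      = ∫ ω, (Real.exp (u * Z ω) - 1 - u * Z ω - u ^ 2 * Z ω ^ 2 / 2) ∂μ := by
    rw [integral_sub (f := fun ω => Real.exp (u * Z ω) - 1 - u * Z ω)
        (g := fun ω => u ^ 2 * Z ω ^ 2 / 2) hB hC,
      integral_sub (f := fun ω => Real.exp (u * Z ω) - 1) (g := fun ω => u * Z ω)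
        hA (hZ1.const_mul u),
      integral_sub (f := fun ω => Real.exp (u * Z ω)) (g := fun _ => (1:ℝ))
        hintu (integrable_const 1)]
    rw [integral_const, integral_const_mul, integral_div, integral_const_mul, hmean]
    have h2' : ∫ ω, Z ω ^ 2 ∂μ = 1 := h2
    rw [h2']
    simp [mgf]
  rw [key]
  have hbound : ∀ ω, ‖Real.exp (u * Z ω) - 1 - u * Z ω - u ^ 2 * Z ω ^ 2 / 2‖
      ≤ |u| ^ 3 * (|Z ω| ^ 3 * Real.exp (D / 4 * |Z ω|)) := by
    intro ω
    rw [Real.norm_eq_abs]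
    have h3 := taylor3 (u * Z ω)
    have heq : (u * Z ω) ^ 2 = u ^ 2 * Z ω ^ 2 := by ring
    rw [heq] at h3
    refine h3.trans ?_
    rw [abs_mul, mul_pow]
    have hexp : Real.exp (|u| * |Z ω|) ≤ Real.exp (D / 4 * |Z ω|) := by
      apply Real.exp_le_exp.2
      exact mul_le_mul_of_nonneg_right hu (abs_nonneg _)
    calc |u| ^ 3 * |Z ω| ^ 3 * Real.exp (|u| * |Z ω|)
        ≤ |u| ^ 3 * |Z ω| ^ 3 * Real.exp (D / 4 * |Z ω|) :=
          mul_le_mul_of_nonneg_left hexp (by positivity)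
    _ = |u| ^ 3 * (|Z ω| ^ 3 * Real.exp (D / 4 * |Z ω|)) := by ring
  calc |∫ ω, (Real.exp (u * Z ω) - 1 - u * Z ω - u ^ 2 * Z ω ^ 2 / 2) ∂μ|
      ≤ ∫ ω, ‖Real.exp (u * Z ω) - 1 - u * Z ω - u ^ 2 * Z ω ^ 2 / 2‖ ∂μ := by
        rw [← Real.norm_eq_abs]; exact norm_integral_le_integral_norm _
  _ ≤ ∫ ω, |u| ^ 3 * (|Z ω| ^ 3 * Real.exp (D / 4 * |Z ω|)) ∂μ := by
      exact integral_mono hD'.norm (hKint.const_mul _) hbound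
  _ = (∫ ω, |Z ω| ^ 3 * Real.exp (D / 4 * |Z ω|) ∂μ) * |u| ^ 3 := by
      rw [integral_const_mul]; ring

/-- Second order expansion of `log ∘ mgf` near `0`. -/
lemma log_mgf_expansion (hZ : Measurable Z) (hD : 0 < D)
    (hint : ∀ l : ℝ, |l| < D → Integrable (fun ω => Real.exp (l * Z ω)) μ)
    (hmean : μ[Z] = 0) (h2 : μ[fun ω => Z ω ^ 2] = 1) :
    ∃ η > (0:ℝ), ∃ C ≥ (0:ℝ), η < D ∧ ∀ u : ℝ, |u| ≤ η →
      0 < mgf Z μ u ∧ |Real.log (mgf Z μ u) - u ^ 2 / 2| ≤ C * |u| ^ 3 := by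
  obtain ⟨K, hK0, hK⟩ := mgf_expansion hZ hD hint hmean h2
  refine ⟨min (D / 4) (min 1 (1 / (1 + 2 * K))), by positivity,
    2 * (1 / 2 + K) ^ 2 + K, by positivity, by
      calc min (D / 4) (min 1 (1 / (1 + 2 * K))) ≤ D / 4 := min_le_left _ _
      _ < D := by linarith, fun u hu => ?_⟩
  have huD4 : |u| ≤ D / 4 := hu.trans (min_le_left _ _)
  have hu1 : |u| ≤ 1 := hu.trans ((min_le_right _ _).trans (min_le_left _ _))
  have huK : |u| ≤ 1 / (1 + 2 * K) := hu.trans ((min_le_right _ _).trans (min_le_right _ _))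
  have hmgfpos : 0 < mgf Z μ u := mgf_pos (hint u (by linarith))
  refine ⟨hmgfpos, ?_⟩
  obtain ⟨w, hw⟩ : ∃ w : ℝ, w = mgf Z μ u - 1 := ⟨_, rfl⟩
  have hwb : |w| ≤ (1 / 2 + K) * u ^ 2 := by
    have h1 := hK u huD4
    have : |w - u ^ 2 / 2| ≤ K * |u| ^ 3 := by
      rw [hw]; exact h1
    have habs : |w| ≤ |u ^ 2 / 2| + K * |u| ^ 3 := by
      have htri := abs_sub_le w (u ^ 2 / 2) 0
      simp only [sub_zero] at htri
      linarith [htri, this]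
    have h3le2 : |u| ^ 3 ≤ u ^ 2 := by
      calc |u| ^ 3 = |u| ^ 2 * |u| := by ring
      _ ≤ |u| ^ 2 * 1 := by apply mul_le_mul_of_nonneg_left hu1 (by positivity)
      _ = u ^ 2 := by rw [mul_one, sq_abs]
    have : |u ^ 2 / 2| = u ^ 2 / 2 := abs_of_nonneg (by positivity)
    nlinarith [hK0, sq_nonneg u]
  have hwhalf : |w| ≤ 1 / 2 := by
    have hu2 : u ^ 2 ≤ |u| * 1 := by
      rw [← sq_abs, pow_two]
      exact mul_le_mul_of_nonneg_left hu1 (abs_nonneg _)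
    have : (1/2 + K) * u ^ 2 ≤ (1/2 + K) * |u| := by
      apply mul_le_mul_of_nonneg_left (by linarith) (by linarith)
    have hKu : (1/2 + K) * |u| ≤ (1/2 + K) * (1 / (1 + 2*K)) :=
      mul_le_mul_of_nonneg_left huK (by linarith)
    have : (1/2 + K) * (1 / (1 + 2*K)) = 1/2 := by
      field_simp
    linarith [hwb]
  -- |log(1+w) - w| ≤ 2 w^2
  have hlog : |Real.log (1 + w) - w| ≤ 2 * w ^ 2 := by
    have hx : |(-w)| < 1 := by rw [abs_neg]; linarith [hwhalf]
    have key := Real.abs_log_sub_add_sum_range_le hx 1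
    norm_num at key
    rw [show -w + Real.log (1 + w) = Real.log (1 + w) - w by ring] at key
    have hwnn : (0:ℝ) ≤ |w| := abs_nonneg w
    have hden : (1:ℝ) - |w| ≥ 1/2 := by linarith [hwhalf]
    have h2' : w ^ 2 / (1 - |w|) ≤ 2 * w ^ 2 := by
      rw [div_le_iff₀ (by linarith)]
      nlinarith [sq_nonneg w, hwhalf, abs_nonneg w]
    linarith [key, h2']
  have hmgfw : mgf Z μ u = 1 + w := by rw [hw]; ring
  have hwu : |w - u ^ 2 / 2| ≤ K * |u| ^ 3 := by
    rw [hw]; exact hK u huD4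
  have hw2 : w ^ 2 ≤ (1/2 + K) ^ 2 * |u| ^ 3 := by
    have h1 : w ^ 2 ≤ ((1/2 + K) * u ^ 2) ^ 2 := by
      rw [← sq_abs w]
      apply pow_le_pow_left₀ (abs_nonneg _) hwb _
    have h2' : ((1/2 + K) * u ^ 2) ^ 2 = (1/2 + K)^2 * (u^2)^2 := by ring
    have h3 : (u ^ 2) ^ 2 ≤ |u| ^ 3 := by
      have : (u ^ 2) ^ 2 = |u| ^ 4 := by rw [← sq_abs u]; ring
      rw [this]
      calc |u| ^ 4 = |u| ^ 3 * |u| := by ring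
      _ ≤ |u| ^ 3 * 1 := mul_le_mul_of_nonneg_left hu1 (by positivity)
      _ = |u| ^ 3 := mul_one _
    nlinarith [sq_nonneg (1/2 + K)]
  calc |Real.log (mgf Z μ u) - u ^ 2 / 2|
      ≤ |Real.log (1 + w) - w| + |w - u ^ 2 / 2| := by
        rw [hmgfw]
        exact abs_sub_le (Real.log (1 + w)) w (u ^ 2 / 2)
  _ ≤ 2 * w ^ 2 + K * |u| ^ 3 := by linarith [hlog, hwu]
  _ ≤ 2 * ((1/2 + K) ^ 2 * |u| ^ 3) + K * |u| ^ 3 := by linarith [hw2]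
  _ = (2 * (1 / 2 + K) ^ 2 + K) * |u| ^ 3 := by ring

end MgfExpansion

section Core

lemma ecoe_le_of_forall_lt {y : ℝ} {L : EReal} (h : ∀ c : ℝ, c < y → (c : EReal) ≤ L) :
    (y : EReal) ≤ L := by
  by_contra h'
  push_neg at h'
  induction L with
  | bot =>
    have := h (y - 1) (by linarith)
    simp only [le_bot_iff] at this
    exact EReal.coe_ne_bot _ this
  | coe l =>
    have hly : l < y := EReal.coe_lt_coe_iff.1 h'
    have := h ((l + y) / 2) (by linarith)
    rw [EReal.coe_le_coe_iff] at this
    linarith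
  | top => exact (not_top_lt (α := EReal)) h'

lemma le_ecoe_of_forall_gt {y : ℝ} {L : EReal} (h : ∀ ε : ℝ, 0 < ε → L ≤ ((y + ε : ℝ) : EReal)) :
    L ≤ (y : EReal) := by
  by_contra h'
  push_neg at h'
  induction L with
  | bot => exact (not_lt_bot h')
  | coe l =>
    have hly : y < l := EReal.coe_lt_coe_iff.1 h'
    have := h ((l - y) / 2) (by linarith)
    rw [EReal.coe_le_coe_iff] at this
    linarith
  | top =>
    have := h 1 one_pos
    rw [top_le_iff] at this
    exact EReal.coe_ne_top _ this

lemma compact_levels_aux (L : ℝ) :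
    IsCompact {x : ℝ | ((x ^ 2 / 2 : ℝ) : EReal) ≤ (L : EReal)} := by
  have hset : {x : ℝ | ((x ^ 2 / 2 : ℝ) : EReal) ≤ (L : EReal)} = {x : ℝ | x ^ 2 / 2 ≤ L} := by
    ext x; simp [EReal.coe_le_coe_iff]
  rw [hset]
  refine IsCompact.of_isClosed_subset (isCompact_Icc (a := -(2 * |L| + 1)) (b := 2 * |L| + 1))
    (isClosed_le (by continuity) continuous_const) ?_
  intro x hx
  simp only [mem_setOf_eq] at hx
  have h1 : x ^ 2 ≤ 2 * |L| := by
    have := le_abs_self L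
    linarith
  constructor
  · nlinarith [sq_nonneg (x + (2 * |L| + 1)), abs_nonneg L]
  · nlinarith [sq_nonneg (x - (2 * |L| + 1)), abs_nonneg L]

/-- The core limit: `(n / aₙ²) · g(c·aₙ/√n) → c²/2` for any `g` with a second-order
expansion at `0`. -/
lemma tendsto_core {a : ℕ → ℝ} (hapos : ∀ n, 0 < a n)
    (haslow : Tendsto (fun n => a n / Real.sqrt n) atTop (nhds 0))
    {g : ℝ → ℝ} {η C : ℝ} (hη : 0 < η)
    (hg : ∀ u : ℝ, |u| ≤ η → |g u - u ^ 2 / 2| ≤ C * |u| ^ 3) (c : ℝ) :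
    Tendsto (fun n : ℕ => ((n : ℝ) / (a n) ^ 2) * g (c * a n / Real.sqrt n)) atTop
      (nhds (c ^ 2 / 2)) := by
  have hs0 : ∀ n : ℕ, 1 ≤ n → 0 < a n / Real.sqrt n := by
    intro n hn
    have : (0:ℝ) < Real.sqrt n := Real.sqrt_pos.2 (by exact_mod_cast Nat.pos_of_ne_zero (by omega))
    exact div_pos (hapos n) this
  have hu : Tendsto (fun n => c * (a n / Real.sqrt n)) atTop (nhds 0) := by
    have := haslow.const_mul c
    simpa using this
  have hev : ∀ᶠ n in atTop, |c * (a n / Real.sqrt n)| ≤ η := by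
    have := Metric.tendsto_nhds.mp hu η hη
    filter_upwards [this] with n hn
    rw [Real.dist_eq, sub_zero] at hn
    exact hn.le
  have key : ∀ᶠ n : ℕ in atTop,
      |((n : ℝ) / (a n) ^ 2) * g (c * a n / Real.sqrt n) - c ^ 2 / 2|
        ≤ (C * |c| ^ 3) * (a n / Real.sqrt n) := by
    filter_upwards [hev, eventually_ge_atTop 1] with n hn hn1
    have hsq : Real.sqrt n ^ 2 = (n : ℝ) := Real.sq_sqrt (Nat.cast_nonneg n)
    have hsqpos : (0:ℝ) < Real.sqrt n :=
      Real.sqrt_pos.2 (by exact_mod_cast Nat.pos_of_ne_zero (by omega))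
    have hna : (0:ℝ) < (n : ℝ) := by exact_mod_cast Nat.pos_of_ne_zero (by omega)
    have hapos' := hapos n
    set v := c * (a n / Real.sqrt n) with hv
    have hvdef : c * a n / Real.sqrt n = v := by rw [hv]; ring
    rw [hvdef]
    have hv2 : ((n : ℝ) / (a n) ^ 2) * (v ^ 2 / 2) = c ^ 2 / 2 := by
      rw [hv]
      field_simp
      rw [hsq]
      ring
    have heq : ((n : ℝ) / (a n) ^ 2) * g v - c ^ 2 / 2
        = ((n : ℝ) / (a n) ^ 2) * (g v - v ^ 2 / 2) := by
      rw [mul_sub, hv2]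
    rw [heq, abs_mul, abs_of_nonneg (by positivity : (0:ℝ) ≤ (n : ℝ) / (a n) ^ 2)]
    have hb := hg v hn
    calc ((n : ℝ) / (a n) ^ 2) * |g v - v ^ 2 / 2|
        ≤ ((n : ℝ) / (a n) ^ 2) * (C * |v| ^ 3) := by
          apply mul_le_mul_of_nonneg_left hb (by positivity)
    _ = (C * |c| ^ 3) * (a n / Real.sqrt n) := by
        rw [hv, abs_mul, abs_of_nonneg (le_of_lt (hs0 n hn1)), mul_pow]
        have h3 : Real.sqrt n ^ 3 = (n : ℝ) * Real.sqrt n := by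
          rw [pow_succ, hsq]
        field_simp
        rw [hsq]
        ring
  have hCs : Tendsto (fun n => (C * |c| ^ 3) * (a n / Real.sqrt n)) atTop (nhds 0) := by
    have := haslow.const_mul (C * |c| ^ 3)
    simpa using this
  have hdiff : Tendsto (fun n : ℕ => ((n : ℝ) / (a n) ^ 2) * g (c * a n / Real.sqrt n) - c ^ 2 / 2)
      atTop (nhds 0) := squeeze_zero_norm' key hCs
  have := hdiff.add_const (c ^ 2 / 2)
  simpa using this

end Core

section Bounds

variable {Ω : Type*} [MeasurableSpace Ω] {μ : Measure Ω} [IsProbabilityMeasure μ]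
  {X : ℕ → Ω → ℝ} {D : ℝ}

lemma int_exp_i (hident : ∀ i, IdentDistrib (X i) (X 0) μ μ) (hcram : ∀ l : ℝ, |l| < D → Integrable (fun ω => Real.exp (l * X 0 ω)) μ)
    (i : ℕ) {t : ℝ} (ht : |t| < D) : Integrable (fun ω => Real.exp (t * X i ω)) μ := by
  have h := (hident i).comp (u := fun x : ℝ => Real.exp (t * x))
    (Real.measurable_exp.comp (measurable_const_mul t))
  exact h.integrable_iff.2 (hcram t ht)

lemma int_exp_S (hmeas : ∀ i, Measurable (X i)) (hident : ∀ i, IdentDistrib (X i) (X 0) μ μ)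
    (hindep : iIndepFun X μ)
    (hcram : ∀ l : ℝ, |l| < D → Integrable (fun ω => Real.exp (l * X 0 ω)) μ)
    (n : ℕ) {t : ℝ} (ht : |t| < D) :
    Integrable (fun ω => Real.exp (t * ∑ i ∈ Finset.range n, X i ω)) μ := by
  have h := hindep.integrable_exp_mul_sum (t := t) hmeas
    (s := Finset.range n) (fun i _ => int_exp_i hident hcram i ht)
  have he : (fun ω => Real.exp (t * (∑ i ∈ Finset.range n, X i) ω))
      = fun ω => Real.exp (t * ∑ i ∈ Finset.range n, X i ω) := by
    funext ω; simp [Finset.sum_apply]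
  rwa [he] at h

lemma mgf_S (hmeas : ∀ i, Measurable (X i)) (hident : ∀ i, IdentDistrib (X i) (X 0) μ μ)
    (hindep : iIndepFun X μ) (n : ℕ) (t : ℝ) :
    mgf (fun ω => ∑ i ∈ Finset.range n, X i ω) μ t = (mgf (X 0) μ t) ^ n := by
  have he : (fun ω => ∑ i ∈ Finset.range n, X i ω) = (∑ i ∈ Finset.range n, X i) := by
    funext ω; simp [Finset.sum_apply]
  rw [he, hindep.mgf_sum hmeas]
  have hm : ∀ i, mgf (X i) μ t = mgf (X 0) μ t := by
    intro i
    have h := (hident i).comp (u := fun x : ℝ => Real.exp (t * x))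
      (Real.measurable_exp.comp (measurable_const_mul t))
    exact h.integral_eq
  rw [Finset.prod_congr rfl fun i _ => hm i, Finset.prod_const, Finset.card_range]

/-- Chernoff-type eventual upper bound for the two tails at level `d`. -/
lemma upper_aux (hmeas : ∀ i, Measurable (X i))
    (hindep : iIndepFun X μ)
    (hident : ∀ i, IdentDistrib (X i) (X 0) μ μ) (hD : 0 < D)
    (hcram : ∀ l : ℝ, |l| < D → Integrable (fun ω => Real.exp (l * X 0 ω)) μ)
    {a : ℕ → ℝ} (hapos : ∀ n, 0 < a n) (hatop : Tendsto a atTop atTop)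
    (haslow : Tendsto (fun n => a n / Real.sqrt n) atTop (nhds 0))
    {η C : ℝ} (hη : 0 < η) (hηD : η < D)
    (hmgf : ∀ u : ℝ, |u| ≤ η →
      0 < mgf (X 0) μ u ∧ |Real.log (mgf (X 0) μ u) - u ^ 2 / 2| ≤ C * |u| ^ 3)
    (d : ℝ) (hd : 0 ≤ d) (ε : ℝ) (hε : 0 < ε) :
    ∀ᶠ n : ℕ in atTop,
      (μ {ω | d ≤ (∑ i ∈ Finset.range n, X i ω) / (a n * Real.sqrt n)}).toReal
        + (μ {ω | (∑ i ∈ Finset.range n, X i ω) / (a n * Real.sqrt n) ≤ -d}).toReal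
      ≤ Real.exp ((-(d ^ 2) / 2 + ε) * (a n) ^ 2) := by
  set M := fun u => mgf (X 0) μ u with hM
  set w1 := fun n : ℕ => -(d ^ 2) + ((n : ℝ) / (a n) ^ 2) * Real.log (M (d * a n / Real.sqrt n))
    with hw1
  set w2 := fun n : ℕ =>
    -(d ^ 2) + ((n : ℝ) / (a n) ^ 2) * Real.log (M (-d * a n / Real.sqrt n)) with hw2
  have hcore := fun c => tendsto_core hapos haslow hη (fun u hu => (hmgf u hu).2) c
  have hW1 : Tendsto w1 atTop (nhds (-(d ^ 2) + d ^ 2 / 2)) := by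
    have := (hcore d).const_add (-(d ^ 2))
    simpa [hw1] using this
  have hW2 : Tendsto w2 atTop (nhds (-(d ^ 2) + d ^ 2 / 2)) := by
    have := (hcore (-d)).const_add (-(d ^ 2))
    simpa [hw2, neg_sq] using this
  have hA2 : Tendsto (fun n => (a n) ^ 2) atTop atTop :=
    (tendsto_pow_atTop (two_ne_zero)).comp hatop
  have hlog2 : Tendsto (fun n : ℕ => Real.log 2 / (a n) ^ 2) atTop (nhds 0) :=
    tendsto_const_nhds.div_atTop hA2
  have hcomb : Tendsto (fun n : ℕ => Real.log 2 / (a n) ^ 2 + max (w1 n) (w2 n)) atTop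
      (nhds (0 + max (-(d ^ 2) + d ^ 2 / 2) (-(d ^ 2) + d ^ 2 / 2))) :=
    hlog2.add (hW1.max hW2)
  have hkey : ∀ᶠ n : ℕ in atTop,
      Real.log 2 / (a n) ^ 2 + max (w1 n) (w2 n) ≤ -(d ^ 2) / 2 + ε / 2 := by
    apply hcomb.eventually_le_const
    rw [max_self]
    linarith
  have htev : ∀ᶠ n : ℕ in atTop, |d * a n / Real.sqrt n| ≤ η := by
    have hu : Tendsto (fun n : ℕ => d * a n / Real.sqrt n) atTop (nhds 0) := by
      have := haslow.const_mul d
      simpa [mul_div_assoc] using this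
    have := Metric.tendsto_nhds.mp hu η hη
    filter_upwards [this] with n hn
    rw [Real.dist_eq, sub_zero] at hn
    exact hn.le
  filter_upwards [hkey, htev, eventually_ge_atTop 1] with n hkn htn hn1
  -- basic positivity facts
  have hna : (0:ℝ) < (n : ℝ) := by exact_mod_cast Nat.pos_of_ne_zero (by omega)
  have hsqpos : (0:ℝ) < Real.sqrt n := Real.sqrt_pos.2 hna
  have hap := hapos n
  have hbpos : (0:ℝ) < a n * Real.sqrt n := by positivity
  set b := a n * Real.sqrt n with hb
  set t := d * a n / Real.sqrt n with ht
  have ht0 : 0 ≤ t := by positivity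
  have htD : |t| < D := lt_of_le_of_lt htn hηD
  have htnD : |(-t)| < D := by rwa [abs_neg]
  have hMpos : 0 < M t := (hmgf t htn).1
  have hMnegpos : 0 < M (-t) := by
    apply (hmgf (-t) (by rwa [abs_neg])).1
  have hintS1 := int_exp_S hmeas hident hindep hcram n htD
  have hintS2 := int_exp_S hmeas hident hindep hcram n htnD
  -- rewrite the two sets
  have hset1 : {ω | d ≤ (∑ i ∈ Finset.range n, X i ω) / (a n * Real.sqrt n)}
      = {ω | d * b ≤ ∑ i ∈ Finset.range n, X i ω} := by
    ext ω
    simp only [mem_setOf_eq, hb]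
    rw [le_div_iff₀ hbpos]
  have hset2 : {ω | (∑ i ∈ Finset.range n, X i ω) / (a n * Real.sqrt n) ≤ -d}
      = {ω | ∑ i ∈ Finset.range n, X i ω ≤ -d * b} := by
    ext ω
    simp only [mem_setOf_eq, hb]
    rw [div_le_iff₀ hbpos]
  -- Chernoff bounds
  have hcher1 : (μ {ω | d * b ≤ ∑ i ∈ Finset.range n, X i ω}).toReal
      ≤ Real.exp (-t * (d * b)) * M t ^ n := by
    have h := measure_ge_le_exp_mul_mgf (μ := μ)
      (X := fun ω => ∑ i ∈ Finset.range n, X i ω) (t := t) (d * b) ht0 hintS1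
    rwa [mgf_S hmeas hident hindep n t] at h
  have hcher2 : (μ {ω | ∑ i ∈ Finset.range n, X i ω ≤ -d * b}).toReal
      ≤ Real.exp (-(-t) * (-d * b)) * M (-t) ^ n := by
    have h := measure_le_le_exp_mul_mgf (μ := μ)
      (X := fun ω => ∑ i ∈ Finset.range n, X i ω) (t := -t) (-d * b)
      (by linarith) hintS2
    rwa [mgf_S hmeas hident hindep n (-t)] at h
  -- identify the exponents
  have htb : t * (d * b) = d ^ 2 * (a n) ^ 2 := by
    rw [ht, hb]
    field_simp
  have hpow1 : Real.exp (-t * (d * b)) * M t ^ n = Real.exp ((a n) ^ 2 * w1 n) := by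
    rw [← Real.exp_log hMpos, ← Real.exp_nat_mul, ← Real.exp_add, hw1]
    congr 1
    rw [neg_mul, htb]
    field_simp
    rfl
  have hpow2 : Real.exp (-(-t) * (-d * b)) * M (-t) ^ n = Real.exp ((a n) ^ 2 * w2 n) := by
    rw [← Real.exp_log hMnegpos, ← Real.exp_nat_mul, ← Real.exp_add, hw2]
    have hnt : -t = -d * a n / Real.sqrt n := by rw [ht]; ring
    rw [hnt]
    congr 1
    have : -(-(d * a n / Real.sqrt n)) * (-d * b) = -(d ^ 2 * (a n) ^ 2) := by
      rw [hb]
      field_simp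
    rw [show (-(-d * a n / Real.sqrt n)) * (-d * b) = -(t * (d * b)) by rw [ht, hb]; ring, htb]
    field_simp
  -- combine
  rw [hset1, hset2]
  have hmax : Real.exp ((a n) ^ 2 * w1 n) + Real.exp ((a n) ^ 2 * w2 n)
      ≤ 2 * Real.exp ((a n) ^ 2 * max (w1 n) (w2 n)) := by
    have h1 : Real.exp ((a n) ^ 2 * w1 n) ≤ Real.exp ((a n) ^ 2 * max (w1 n) (w2 n)) :=
      Real.exp_le_exp.2 (mul_le_mul_of_nonneg_left (le_max_left _ _) (by positivity))
    have h2 : Real.exp ((a n) ^ 2 * w2 n) ≤ Real.exp ((a n) ^ 2 * max (w1 n) (w2 n)) :=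
      Real.exp_le_exp.2 (mul_le_mul_of_nonneg_left (le_max_right _ _) (by positivity))
    linarith
  have hfin : 2 * Real.exp ((a n) ^ 2 * max (w1 n) (w2 n))
      ≤ Real.exp ((-(d ^ 2) / 2 + ε) * (a n) ^ 2) := by
    have ha2 : (0:ℝ) < (a n) ^ 2 := by positivity
    have h2e : (2:ℝ) * Real.exp ((a n) ^ 2 * max (w1 n) (w2 n))
        = Real.exp (Real.log 2 + (a n) ^ 2 * max (w1 n) (w2 n)) := by
      rw [Real.exp_add, Real.exp_log two_pos]
    rw [h2e]
    apply Real.exp_le_exp.2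
    calc Real.log 2 + (a n) ^ 2 * max (w1 n) (w2 n)
        = (a n) ^ 2 * (Real.log 2 / (a n) ^ 2 + max (w1 n) (w2 n)) := by
          rw [mul_add, mul_comm ((a n) ^ 2) (Real.log 2 / (a n) ^ 2),
            div_mul_cancel₀ _ (ne_of_gt ha2)]
    _ ≤ (a n) ^ 2 * (-(d ^ 2) / 2 + ε / 2) := by
          apply mul_le_mul_of_nonneg_left hkn ha2.le
    _ ≤ (-(d ^ 2) / 2 + ε) * (a n) ^ 2 := by nlinarith
  calc (μ {ω | d * b ≤ ∑ i ∈ Finset.range n, X i ω}).toReal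
      + (μ {ω | ∑ i ∈ Finset.range n, X i ω ≤ -d * b}).toReal
      ≤ Real.exp ((a n) ^ 2 * w1 n) + Real.exp ((a n) ^ 2 * w2 n) := by
        rw [← hpow1, ← hpow2]
        exact add_le_add hcher1 hcher2
  _ ≤ 2 * Real.exp ((a n) ^ 2 * max (w1 n) (w2 n)) := hmax
  _ ≤ Real.exp ((-(d ^ 2) / 2 + ε) * (a n) ^ 2) := hfin

end Bounds

section Lower

set_option maxHeartbeats 1000000

variable {Ω : Type*} [MeasurableSpace Ω] {μ : Measure Ω} [IsProbabilityMeasure μ]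
  {X : ℕ → Ω → ℝ} {D : ℝ}

/-- helper : eventual bound `|c·aₙ/√n| ≤ η`. -/
lemma ev_abs_le {a : ℕ → ℝ} (haslow : Tendsto (fun n => a n / Real.sqrt n) atTop (nhds 0))
    {η : ℝ} (hη : 0 < η) (c : ℝ) :
    ∀ᶠ n : ℕ in atTop, |c * a n / Real.sqrt n| ≤ η := by
  have hu : Tendsto (fun n : ℕ => c * a n / Real.sqrt n) atTop (nhds 0) := by
    have := haslow.const_mul c
    simpa [mul_div_assoc] using this
  have := Metric.tendsto_nhds.mp hu η hη
  filter_upwards [this] with n hn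
  rw [Real.dist_eq, sub_zero] at hn
  exact hn.le

set_option maxHeartbeats 1000000 in
/-- Lower bound: eventually the ball `{|Sₙ/bₙ - x| < δ}` has probability at least
`exp(c·aₙ²)` for any `c < -x²/2 - |x|δ`. -/
lemma lower_aux (hmeas : ∀ i, Measurable (X i))
    (hindep : iIndepFun X μ)
    (hident : ∀ i, IdentDistrib (X i) (X 0) μ μ) (hD : 0 < D)
    (hcram : ∀ l : ℝ, |l| < D → Integrable (fun ω => Real.exp (l * X 0 ω)) μ)
    {a : ℕ → ℝ} (hapos : ∀ n, 0 < a n) (hatop : Tendsto a atTop atTop)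
    (haslow : Tendsto (fun n => a n / Real.sqrt n) atTop (nhds 0))
    {η C : ℝ} (hη : 0 < η) (hηD : η < D)
    (hmgf : ∀ u : ℝ, |u| ≤ η →
      0 < mgf (X 0) μ u ∧ |Real.log (mgf (X 0) μ u) - u ^ 2 / 2| ≤ C * |u| ^ 3)
    (x δ : ℝ) (hδ : 0 < δ) (c : ℝ) (hc : c < -(x ^ 2) / 2 - |x| * δ) :
    ∀ᶠ n : ℕ in atTop,
      Real.exp (c * (a n) ^ 2)
        ≤ (μ {ω | |(∑ i ∈ Finset.range n, X i ω) / (a n * Real.sqrt n) - x| < δ}).toReal := by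
  set M := fun u => mgf (X 0) μ u with hM
  have hcore := fun c' => tendsto_core hapos haslow hη (fun u hu => (hmgf u hu).2) c'
  have hA2 : Tendsto (fun n : ℕ => (a n) ^ 2) atTop atTop :=
    (tendsto_pow_atTop (two_ne_zero)).comp hatop
  -- ratio exponents
  set r1 := fun n : ℕ => -(δ * (x + δ)) + (((n : ℝ) / (a n) ^ 2) * Real.log (M ((x + δ) * a n / Real.sqrt n))
      - ((n : ℝ) / (a n) ^ 2) * Real.log (M (x * a n / Real.sqrt n))) with hr1
  set r2 := fun n : ℕ => δ * (x - δ) + (((n : ℝ) / (a n) ^ 2) * Real.log (M ((x - δ) * a n / Real.sqrt n))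
      - ((n : ℝ) / (a n) ^ 2) * Real.log (M (x * a n / Real.sqrt n))) with hr2
  have hR1 : Tendsto r1 atTop (nhds (-(δ ^ 2) / 2)) := by
    have := ((hcore (x + δ)).sub (hcore x)).const_add (-(δ * (x + δ)))
    have he : -(δ * (x + δ)) + ((x + δ) ^ 2 / 2 - x ^ 2 / 2) = -(δ ^ 2) / 2 := by ring
    rw [he] at this
    exact this
  have hR2 : Tendsto r2 atTop (nhds (-(δ ^ 2) / 2)) := by
    have := ((hcore (x - δ)).sub (hcore x)).const_add (δ * (x - δ))
    have he : δ * (x - δ) + ((x - δ) ^ 2 / 2 - x ^ 2 / 2) = -(δ ^ 2) / 2 := by ring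
    rw [he] at this
    exact this
  have hδ2 : -(δ ^ 2) / 2 < 0 := by nlinarith
  have hrat1 : ∀ᶠ n : ℕ in atTop, (a n) ^ 2 * r1 n ≤ Real.log (1 / 4) :=
    (hA2.atTop_mul_neg hδ2 hR1).eventually_le_atBot _
  have hrat2 : ∀ᶠ n : ℕ in atTop, (a n) ^ 2 * r2 n ≤ Real.log (1 / 4) :=
    (hA2.atTop_mul_neg hδ2 hR2).eventually_le_atBot _
  -- main exponent
  set v := fun n : ℕ => -(x ^ 2 + |x| * δ)
      + ((n : ℝ) / (a n) ^ 2) * Real.log (M (x * a n / Real.sqrt n)) - Real.log 2 / (a n) ^ 2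
    with hv
  have hV : Tendsto v atTop (nhds (-(x ^ 2 + |x| * δ) + x ^ 2 / 2 - 0)) :=
    ((hcore x).const_add (-(x ^ 2 + |x| * δ))).sub (tendsto_const_nhds.div_atTop hA2)
  have hcv : ∀ᶠ n : ℕ in atTop, c ≤ v n := by
    apply hV.eventually_const_le
    have : -(x ^ 2 + |x| * δ) + x ^ 2 / 2 - 0 = -(x ^ 2) / 2 - |x| * δ := by ring
    rw [this]
    exact hc
  filter_upwards [hrat1, hrat2, hcv, ev_abs_le haslow hη x, ev_abs_le haslow hη (x + δ),
    ev_abs_le haslow hη (x - δ), eventually_ge_atTop 1] with n h1 h2 h3 hax haxd haxd' hn1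
  -- per-n setup
  have hna : (0:ℝ) < (n : ℝ) := by exact_mod_cast Nat.pos_of_ne_zero (by omega)
  have hsqpos : (0:ℝ) < Real.sqrt n := Real.sqrt_pos.2 hna
  have hap := hapos n
  set b := a n * Real.sqrt n with hb
  have hbpos : (0:ℝ) < b := by positivity
  set t := x * a n / Real.sqrt n with ht
  set s := δ * a n / Real.sqrt n with hs
  have hs0 : 0 < s := by positivity
  have htps : t + s = (x + δ) * a n / Real.sqrt n := by rw [ht, hs]; ring
  have htms : t - s = (x - δ) * a n / Real.sqrt n := by rw [ht, hs]; ring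
  have htη : |t| ≤ η := hax
  have htpsη : |t + s| ≤ η := by rw [htps]; exact haxd
  have htmsη : |t - s| ≤ η := by rw [htms]; exact haxd'
  have htD : |t| < D := lt_of_le_of_lt htη hηD
  have htpsD : |t + s| < D := lt_of_le_of_lt htpsη hηD
  have htmsD : |t - s| < D := lt_of_le_of_lt htmsη hηD
  set S := fun ω => ∑ i ∈ Finset.range n, X i ω with hS
  have hSmeas : Measurable S := Finset.measurable_sum _ fun i _ => hmeas i
  have hint_t : Integrable (fun ω => Real.exp (t * S ω)) μ :=
    int_exp_S hmeas hident hindep hcram n htD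
  have hint_tps : Integrable (fun ω => Real.exp ((t + s) * S ω)) μ :=
    int_exp_S hmeas hident hindep hcram n htpsD
  have hint_tms : Integrable (fun ω => Real.exp ((t - s) * S ω)) μ :=
    int_exp_S hmeas hident hindep hcram n htmsD
  have hMt : 0 < M t := (hmgf t htη).1
  have hMtps : 0 < M (t + s) := (hmgf _ htpsη).1
  have hMtms : 0 < M (t - s) := (hmgf _ htmsη).1
  set B := {ω | |S ω / b - x| < δ} with hBdef
  set C1 := {ω | (x + δ) * b ≤ S ω} with hC1def
  set C2 := {ω | S ω ≤ (x - δ) * b} with hC2def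
  have hBm : MeasurableSet B :=
    measurableSet_lt (((hSmeas.div_const b).sub_const x).abs) measurable_const
  have hC1m : MeasurableSet C1 := measurableSet_le measurable_const hSmeas
  have hC2m : MeasurableSet C2 := measurableSet_le hSmeas measurable_const
  have hcompl : Bᶜ = C1 ∪ C2 := by
    ext ω
    simp only [hBdef, hC1def, hC2def, mem_compl_iff, mem_setOf_eq, mem_union, not_lt]
    rw [le_abs]
    constructor
    · rintro (h | h)
      · left
        have hxd : x + δ ≤ S ω / b := by linarith
        calc (x + δ) * b ≤ (S ω / b) * b := mul_le_mul_of_nonneg_right hxd hbpos.le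
        _ = S ω := by field_simp
      · right
        rw [← sub_nonneg]
        have hh : S ω / b ≤ x - δ := by linarith
        have := mul_le_mul_of_nonneg_right hh hbpos.le
        rw [div_mul_cancel₀ _ (ne_of_gt hbpos)] at this
        linarith
    · rintro (h | h)
      · left
        have : x + δ ≤ S ω / b := by
          rw [le_div_iff₀ hbpos]; exact h
        linarith
      · right
        have : S ω / b ≤ x - δ := by
          rw [div_le_iff₀ hbpos]; exact h
        linarith
  have hdisj : Disjoint C1 C2 := by
    rw [Set.disjoint_left]
    intro ω hω1 hω2
    simp only [hC1def, hC2def, mem_setOf_eq] at hω1 hω2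
    have hlt : (x - δ) * b < (x + δ) * b :=
      mul_lt_mul_of_pos_right (by linarith) hbpos
    linarith
  -- bound on ∫_{C1} exp(t S)
  have hE1 : ∫ ω in C1, Real.exp (t * S ω) ∂μ
      ≤ Real.exp (-(s * ((x + δ) * b))) * (M (t + s)) ^ n := by
    have hptwise : ∀ ω ∈ C1, Real.exp (t * S ω)
        ≤ Real.exp (-(s * ((x + δ) * b))) * Real.exp ((t + s) * S ω) := by
      intro ω hω
      rw [← Real.exp_add]
      apply Real.exp_le_exp.2
      have hω' : (x + δ) * b ≤ S ω := hω
      have h := mul_le_mul_of_nonneg_left hω' hs0.le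
      ring_nf
      ring_nf at h
      linarith [h]
    calc ∫ ω in C1, Real.exp (t * S ω) ∂μ
        ≤ ∫ ω in C1, Real.exp (-(s * ((x + δ) * b))) * Real.exp ((t + s) * S ω) ∂μ :=
          setIntegral_mono_on hint_t.integrableOn (hint_tps.const_mul _).integrableOn hC1m hptwise
    _ = Real.exp (-(s * ((x + δ) * b))) * ∫ ω in C1, Real.exp ((t + s) * S ω) ∂μ :=
          integral_const_mul _ _
    _ ≤ Real.exp (-(s * ((x + δ) * b))) * ∫ ω, Real.exp ((t + s) * S ω) ∂μ := by
          apply mul_le_mul_of_nonneg_left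
            (setIntegral_le_integral hint_tps (ae_of_all _ fun ω => (Real.exp_pos _).le))
            (Real.exp_pos _).le
    _ = Real.exp (-(s * ((x + δ) * b))) * (M (t + s)) ^ n := by
          rw [show ∫ ω, Real.exp ((t + s) * S ω) ∂μ = mgf S μ (t + s) from rfl, hS,
            mgf_S hmeas hident hindep n (t + s)]
  have hE2 : ∫ ω in C2, Real.exp (t * S ω) ∂μ
      ≤ Real.exp (s * ((x - δ) * b)) * (M (t - s)) ^ n := by
    have hptwise : ∀ ω ∈ C2, Real.exp (t * S ω)
        ≤ Real.exp (s * ((x - δ) * b)) * Real.exp ((t - s) * S ω) := by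
      intro ω hω
      rw [← Real.exp_add]
      apply Real.exp_le_exp.2
      have hω' : S ω ≤ (x - δ) * b := hω
      have h := mul_le_mul_of_nonneg_left hω' hs0.le
      ring_nf
      ring_nf at h
      linarith [h]
    calc ∫ ω in C2, Real.exp (t * S ω) ∂μ
        ≤ ∫ ω in C2, Real.exp (s * ((x - δ) * b)) * Real.exp ((t - s) * S ω) ∂μ :=
          setIntegral_mono_on hint_t.integrableOn (hint_tms.const_mul _).integrableOn hC2m hptwise
    _ = Real.exp (s * ((x - δ) * b)) * ∫ ω in C2, Real.exp ((t - s) * S ω) ∂μ :=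
          integral_const_mul _ _
    _ ≤ Real.exp (s * ((x - δ) * b)) * ∫ ω, Real.exp ((t - s) * S ω) ∂μ := by
          apply mul_le_mul_of_nonneg_left
            (setIntegral_le_integral hint_tms (ae_of_all _ fun ω => (Real.exp_pos _).le))
            (Real.exp_pos _).le
    _ = Real.exp (s * ((x - δ) * b)) * (M (t - s)) ^ n := by
          rw [show ∫ ω, Real.exp ((t - s) * S ω) ∂μ = mgf S μ (t - s) from rfl, hS,
            mgf_S hmeas hident hindep n (t - s)]
  -- identify: exp(-(s(x+δ)b)) M(t+s)^n = exp(a² r1) M(t)^n ≤ (1/4) M(t)^n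
  have hsb : s * b = δ * (a n) ^ 2 := by
    rw [hs, hb]
    field_simp
  have hMexp : ∀ u : ℝ, 0 < M u → (M u) ^ n = Real.exp ((n : ℝ) * Real.log (M u)) := by
    intro u hu
    rw [← Real.exp_log hu, ← Real.exp_nat_mul, Real.exp_log hu]
  have hquarter1 : Real.exp (-(s * ((x + δ) * b))) * (M (t + s)) ^ n
      ≤ (1 / 4) * (M t) ^ n := by
    have hid : Real.exp (-(s * ((x + δ) * b))) * (M (t + s)) ^ n
        = Real.exp ((a n) ^ 2 * r1 n) * (M t) ^ n := by
      rw [hMexp _ hMtps, hMexp _ hMt, ← Real.exp_add, ← Real.exp_add, hr1, htps]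
      congr 1
      have : s * ((x + δ) * b) = (x + δ) * (δ * (a n) ^ 2) := by
        rw [show s * ((x + δ) * b) = (x + δ) * (s * b) by ring, hsb]
      rw [this]
      field_simp
      ring
    rw [hid]
    apply mul_le_mul_of_nonneg_right _ (by positivity)
    calc Real.exp ((a n) ^ 2 * r1 n) ≤ Real.exp (Real.log (1 / 4)) := Real.exp_le_exp.2 h1
    _ = 1 / 4 := Real.exp_log (by norm_num)
  have hquarter2 : Real.exp (s * ((x - δ) * b)) * (M (t - s)) ^ n
      ≤ (1 / 4) * (M t) ^ n := by
    have hid : Real.exp (s * ((x - δ) * b)) * (M (t - s)) ^ n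
        = Real.exp ((a n) ^ 2 * r2 n) * (M t) ^ n := by
      rw [hMexp _ hMtms, hMexp _ hMt, ← Real.exp_add, ← Real.exp_add, hr2, htms]
      congr 1
      have : s * ((x - δ) * b) = (x - δ) * (δ * (a n) ^ 2) := by
        rw [show s * ((x - δ) * b) = (x - δ) * (s * b) by ring, hsb]
      rw [this]
      field_simp
      ring
    rw [hid]
    apply mul_le_mul_of_nonneg_right _ (by positivity)
    calc Real.exp ((a n) ^ 2 * r2 n) ≤ Real.exp (Real.log (1 / 4)) := Real.exp_le_exp.2 h2
    _ = 1 / 4 := Real.exp_log (by norm_num)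
  -- ∫_B exp(tS) ≥ M(t)^n / 2
  have htotal : ∫ ω in B, Real.exp (t * S ω) ∂μ + ∫ ω in Bᶜ, Real.exp (t * S ω) ∂μ
      = (M t) ^ n := by
    rw [integral_add_compl hBm hint_t,
      show ∫ ω, Real.exp (t * S ω) ∂μ = mgf S μ t from rfl, hS,
      mgf_S hmeas hident hindep n t]
  have hsplit : ∫ ω in Bᶜ, Real.exp (t * S ω) ∂μ
      = ∫ ω in C1, Real.exp (t * S ω) ∂μ + ∫ ω in C2, Real.exp (t * S ω) ∂μ := by
    rw [hcompl]
    exact setIntegral_union hdisj hC2m hint_t.integrableOn hint_t.integrableOn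
  have hBhalf : (M t) ^ n / 2 ≤ ∫ ω in B, Real.exp (t * S ω) ∂μ := by
    have hMtn : (0:ℝ) < (M t) ^ n := by positivity
    have : ∫ ω in Bᶜ, Real.exp (t * S ω) ∂μ ≤ (1/2) * (M t) ^ n := by
      rw [hsplit]
      calc ∫ ω in C1, Real.exp (t * S ω) ∂μ + ∫ ω in C2, Real.exp (t * S ω) ∂μ
          ≤ (1/4) * (M t) ^ n + (1/4) * (M t) ^ n :=
            add_le_add (hE1.trans hquarter1) (hE2.trans hquarter2)
      _ = (1/2) * (M t) ^ n := by ring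
    linarith [htotal]
  -- from ∫_B exp(tS) to μ(B)
  have hmub : ∫ ω in B, Real.exp (-(t * x * b + |t| * δ * b)) * Real.exp (t * S ω) ∂μ
      ≤ (μ B).toReal := by
    have hone : ∫ ω in B, (1:ℝ) ∂μ = (μ B).toReal := by
      rw [setIntegral_const]
      simp [Measure.real]
    rw [← hone]
    apply setIntegral_mono_on ((hint_t.const_mul _).integrableOn)
      integrableOn_const hBm
    intro ω hω
    rw [← Real.exp_add]
    have hbd : |S ω / b - x| < δ := hω
    have hSb : |S ω - x * b| < δ * b := by
      have h0 : S ω - x * b = (S ω / b - x) * b := by field_simp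
      rw [h0, abs_mul, abs_of_pos hbpos]
      exact mul_lt_mul_of_pos_right hbd hbpos
    have hts : t * S ω - t * x * b ≤ |t| * δ * b := by
      have : t * S ω - t * x * b = t * (S ω - x * b) := by ring
      rw [this]
      calc t * (S ω - x * b) ≤ |t * (S ω - x * b)| := le_abs_self _
      _ = |t| * |S ω - x * b| := abs_mul _ _
      _ ≤ |t| * (δ * b) := by
          apply mul_le_mul_of_nonneg_left hSb.le (abs_nonneg _)
      _ = |t| * δ * b := by ring
    have : -(t * x * b + |t| * δ * b) + t * S ω ≤ 0 := by linarith
    calc Real.exp (-(t * x * b + |t| * δ * b) + t * S ω) ≤ Real.exp 0 :=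
      Real.exp_le_exp.2 this
    _ = 1 := Real.exp_zero
  -- final chain
  have htb : t * b = x * (a n) ^ 2 := by
    rw [ht, hb]
    field_simp
  have habs : |t| * b = |x| * (a n) ^ 2 := by
    rw [ht, hb]
    rw [abs_div, abs_mul, abs_of_pos hap, abs_of_pos hsqpos]
    field_simp
  have hfinal : Real.exp (c * (a n) ^ 2) ≤ (μ B).toReal := by
    have h5 : Real.exp (-(t * x * b + |t| * δ * b)) * ((M t) ^ n / 2) ≤ (μ B).toReal := by
      calc Real.exp (-(t * x * b + |t| * δ * b)) * ((M t) ^ n / 2)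
          ≤ Real.exp (-(t * x * b + |t| * δ * b)) * ∫ ω in B, Real.exp (t * S ω) ∂μ := by
            apply mul_le_mul_of_nonneg_left hBhalf (Real.exp_pos _).le
      _ = ∫ ω in B, Real.exp (-(t * x * b + |t| * δ * b)) * Real.exp (t * S ω) ∂μ :=
            (integral_const_mul _ _).symm
      _ ≤ (μ B).toReal := hmub
    refine le_trans ?_ h5
    have hid : Real.exp (-(t * x * b + |t| * δ * b)) * ((M t) ^ n / 2)
        = Real.exp ((a n) ^ 2 * v n) := by
      rw [hMexp _ hMt, hv]
      rw [show t * x * b = x * (t * b) by ring, htb,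
        show |t| * δ * b = δ * (|t| * b) by ring, habs]
      rw [show Real.exp ((n : ℝ) * Real.log (M (x * a n / Real.sqrt n))) / 2
          = Real.exp ((n : ℝ) * Real.log (M (x * a n / Real.sqrt n))) * Real.exp (-(Real.log 2))
          by rw [Real.exp_neg, Real.exp_log two_pos]; ring]
      rw [← Real.exp_add, ← Real.exp_add]
      congr 1
      field_simp
      ring
    rw [hid]
    apply Real.exp_le_exp.2
    calc c * (a n) ^ 2 ≤ v n * (a n) ^ 2 := by
          apply mul_le_mul_of_nonneg_right h3 (by positivity)
    _ = (a n) ^ 2 * v n := mul_comm _ _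
  exact hfinal

end Lower

end MDPAux

open MDPAux

/-- **MDP for i.i.d. sums (Theorem 2.1).** If `X₀, X₁, …` are i.i.d. centered real random
variables with variance one satisfying Cramér's condition, and `aₙ → ∞` with `aₙ/√n → 0`,
then `(1/(aₙ√n)) ∑_{i<n} Xᵢ` obeys an MDP with speed `aₙ²` and rate `x²/2`. -/
theorem mdp_iid_sums {Ω : Type*} [MeasurableSpace Ω] (μ : Measure Ω) [IsProbabilityMeasure μ]
    (X : ℕ → Ω → ℝ) (hmeas : ∀ i, Measurable (X i))
    (hindep : iIndepFun X μ)
    (hident : ∀ i, IdentDistrib (X i) (X 0) μ μ)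
    (hmean : μ[X 0] = 0) (hvar : variance (X 0) μ = 1)
    (hcramer : ∃ D > (0 : ℝ), ∀ l : ℝ, |l| < D → Integrable (fun ω => Real.exp (l * X 0 ω)) μ)
    (a : ℕ → ℝ) (hapos : ∀ n, 0 < a n) (hatop : Tendsto a atTop atTop)
    (haslow : Tendsto (fun n => a n / Real.sqrt n) atTop (nhds 0)) :
    HasLDP μ atTop
      (fun n ω => (∑ i ∈ Finset.range n, X i ω) / (a n * Real.sqrt n))
      (fun n => (a n) ^ 2)
      (fun x => ((x ^ 2 / 2 : ℝ) : EReal)) := by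
  obtain ⟨D, hD, hcram⟩ := hcramer
  -- second moment equals one
  have hsq : μ[fun ω => X 0 ω ^ 2] = 1 := by
    have hL2 : MemLp (X 0) 2 μ :=
      (memLp_two_iff_integrable_sq (hmeas 0).aestronglyMeasurable).2
        (int_Zsq (hmeas 0) hD hcram)
    have hv := variance_eq_sub hL2
    rw [hvar, hmean] at hv
    have he : (X 0) ^ 2 = fun ω => X 0 ω ^ 2 := by funext ω; simp
    rw [he] at hv
    linarith [hv]
  obtain ⟨η, hη, C, hC, hηD, hmgf⟩ := log_mgf_expansion (hmeas 0) hD hcram hmean hsq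
  constructor
  · intro x
    exact EReal.coe_nonneg.2 (by positivity)
  · exact compact_levels_aux
  · -- lower bound
    intro G hG
    rw [EReal.neg_le]
    refine le_iInf fun x => le_iInf fun hxG => ?_
    have hmain : ((-(x ^ 2 / 2) : ℝ) : EReal) ≤ Filter.liminf
        (fun n : ℕ => ((((fun n => (a n) ^ 2) n)⁻¹ : ℝ) : EReal)
          * ENNReal.log (μ {ω | (fun n ω => (∑ i ∈ Finset.range n, X i ω)
              / (a n * Real.sqrt n)) n ω ∈ G})) atTop := by
      apply ecoe_le_of_forall_lt
      intro c hc
      have hc' : c < -(x ^ 2) / 2 := by linarith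
      obtain ⟨δ₀, hδ₀, hball⟩ := Metric.isOpen_iff.1 hG x hxG
      set K := -(x ^ 2) / 2 - c with hK
      have hK0 : 0 < K := by rw [hK]; linarith
      set δ := min (δ₀ / 2) (K / (2 * (|x| + 1))) with hδdef
      have hδpos : 0 < δ := lt_min (by linarith) (by positivity)
      have hcδ : c < -(x ^ 2) / 2 - |x| * δ := by
        have h1 : δ ≤ K / (2 * (|x| + 1)) := min_le_right _ _
        have h2 : |x| * δ ≤ |x| * (K / (2 * (|x| + 1))) :=
          mul_le_mul_of_nonneg_left h1 (abs_nonneg x)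
        have h3 : |x| * (K / (2 * (|x| + 1))) ≤ K / 2 := by
          rw [mul_comm, div_mul_eq_mul_div, div_le_div_iff₀ (by positivity) (by norm_num)]
          nlinarith [abs_nonneg x, hK0]
        have h4 : |x| * δ ≤ K / 2 := h2.trans h3
        rw [hK] at h4
        linarith
      apply le_liminf_of_le (by isBoundedDefault)
      filter_upwards [lower_aux hmeas hindep hident hD hcram hapos hatop haslow hη hηD hmgf
        x δ hδpos c hcδ] with n hn
      have hsubset : {ω | |(∑ i ∈ Finset.range n, X i ω) / (a n * Real.sqrt n) - x| < δ}
          ⊆ {ω | (∑ i ∈ Finset.range n, X i ω) / (a n * Real.sqrt n) ∈ G} := by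
        intro ω hω
        simp only [mem_setOf_eq] at hω ⊢
        apply hball
        rw [Metric.mem_ball, Real.dist_eq]
        calc |(∑ i ∈ Finset.range n, X i ω) / (a n * Real.sqrt n) - x| < δ := hω
        _ ≤ δ₀ / 2 := min_le_left _ _
        _ < δ₀ := by linarith
      have hμle : Real.exp (c * (a n) ^ 2)
          ≤ (μ {ω | (∑ i ∈ Finset.range n, X i ω) / (a n * Real.sqrt n) ∈ G}).toReal :=
        hn.trans (ENNReal.toReal_mono (measure_ne_top μ _) (measure_mono hsubset))
      have hμpos : 0 < (μ {ω | (∑ i ∈ Finset.range n, X i ω) / (a n * Real.sqrt n) ∈ G}).toReal :=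
        lt_of_lt_of_le (Real.exp_pos _) hμle
      rw [ENNReal.log_pos_real' hμpos, ← EReal.coe_mul, EReal.coe_le_coe_iff]
      have hap := hapos n
      have ha2 : (0:ℝ) < (a n) ^ 2 := by positivity
      have hlog : c * (a n) ^ 2
          ≤ Real.log (μ {ω | (∑ i ∈ Finset.range n, X i ω) / (a n * Real.sqrt n) ∈ G}).toReal := by
        calc c * (a n) ^ 2 = Real.log (Real.exp (c * (a n) ^ 2)) := (Real.log_exp _).symm
        _ ≤ _ := Real.log_le_log (Real.exp_pos _) hμle
      calc c = ((a n) ^ 2)⁻¹ * (c * (a n) ^ 2) := by field_simp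
      _ ≤ ((a n) ^ 2)⁻¹ * Real.log
            (μ {ω | (∑ i ∈ Finset.range n, X i ω) / (a n * Real.sqrt n) ∈ G}).toReal :=
          mul_le_mul_of_nonneg_left hlog (by positivity)
    rw [show ((-(x ^ 2 / 2) : ℝ) : EReal) = -(((x ^ 2 / 2 : ℝ)) : EReal) from EReal.coe_neg _]
      at hmain
    exact EReal.neg_le.mp hmain
  · -- upper bound
    intro A hA
    rcases Set.eq_empty_or_nonempty A with rfl | ⟨x₀, hx₀⟩
    · have hbot : (fun n : ℕ => ((((a n) ^ 2)⁻¹ : ℝ) : EReal)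
          * ENNReal.log (μ {ω | (∑ i ∈ Finset.range n, X i ω) / (a n * Real.sqrt n)
            ∈ (∅ : Set ℝ)})) = fun _ : ℕ => (⊥ : EReal) := by
        funext n
        have he : {ω | (∑ i ∈ Finset.range n, X i ω) / (a n * Real.sqrt n) ∈ (∅ : Set ℝ)}
            = (∅ : Set Ω) := by simp
        rw [he, measure_empty, ENNReal.log_zero]
        exact EReal.coe_mul_bot_of_pos (inv_pos.2 (pow_pos (hapos n) 2))
      rw [hbot, limsup_const]
      exact bot_le
    · set J := ⨅ x ∈ A, ((x ^ 2 / 2 : ℝ) : EReal) with hJ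
      have hJ0 : 0 ≤ J := le_iInf fun x => le_iInf fun _ => EReal.coe_nonneg.2 (by positivity)
      have hJtop : J ≠ ⊤ := by
        apply ne_top_of_le_ne_top (EReal.coe_ne_top (x₀ ^ 2 / 2))
        exact iInf₂_le x₀ hx₀
      have hJbot : J ≠ ⊥ := by
        intro h
        rw [h] at hJ0
        simp at hJ0
      set jr := J.toReal with hjrdef
      have hjrJ : (jr : EReal) = J := EReal.coe_toReal hJtop hJbot
      have hjr0 : 0 ≤ jr := EReal.coe_nonneg.1 (by rw [hjrJ]; exact hJ0)
      set d := Real.sqrt (2 * jr) with hddef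
      have hd0 : 0 ≤ d := Real.sqrt_nonneg _
      have hd2 : d ^ 2 = 2 * jr := Real.sq_sqrt (by positivity)
      have hdabs : ∀ x ∈ A, d ≤ |x| := by
        intro x hx
        have h1 : (jr : EReal) ≤ ((x ^ 2 / 2 : ℝ) : EReal) := by
          rw [hjrJ]
          exact iInf₂_le x hx
        rw [EReal.coe_le_coe_iff] at h1
        calc d = Real.sqrt (2 * jr) := rfl
        _ ≤ Real.sqrt (x ^ 2) := Real.sqrt_le_sqrt (by linarith)
        _ = |x| := Real.sqrt_sq_eq_abs x
      rw [← hjrJ, ← EReal.coe_neg]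
      apply le_ecoe_of_forall_gt
      intro ε hε
      apply limsup_le_of_le (by isBoundedDefault)
      filter_upwards [upper_aux hmeas hindep hident hD hcram hapos hatop haslow hη hηD hmgf
        d hd0 ε hε] with n hn
      by_cases hz : μ {ω | (∑ i ∈ Finset.range n, X i ω) / (a n * Real.sqrt n) ∈ A} = 0
      · rw [hz, ENNReal.log_zero,
          EReal.coe_mul_bot_of_pos (inv_pos.2 (pow_pos (hapos n) 2))]
        exact bot_le
      · have hμpos : 0 < (μ {ω | (∑ i ∈ Finset.range n, X i ω) / (a n * Real.sqrt n) ∈ A}).toReal :=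
          ENNReal.toReal_pos hz (measure_ne_top μ _)
        have hsubset : {ω | (∑ i ∈ Finset.range n, X i ω) / (a n * Real.sqrt n) ∈ A}
            ⊆ {ω | d ≤ (∑ i ∈ Finset.range n, X i ω) / (a n * Real.sqrt n)}
              ∪ {ω | (∑ i ∈ Finset.range n, X i ω) / (a n * Real.sqrt n) ≤ -d} := by
          intro ω hω
          simp only [mem_setOf_eq, mem_union] at hω ⊢
          rcases le_abs.1 (hdabs _ hω) with h | h
          · exact Or.inl h
          · exact Or.inr (by linarith)
        have htre : (μ {ω | (∑ i ∈ Finset.range n, X i ω) / (a n * Real.sqrt n) ∈ A}).toReal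
            ≤ (μ {ω | d ≤ (∑ i ∈ Finset.range n, X i ω) / (a n * Real.sqrt n)}).toReal
              + (μ {ω | (∑ i ∈ Finset.range n, X i ω) / (a n * Real.sqrt n) ≤ -d}).toReal := by
          calc (μ {ω | (∑ i ∈ Finset.range n, X i ω) / (a n * Real.sqrt n) ∈ A}).toReal
              ≤ (μ ({ω | d ≤ (∑ i ∈ Finset.range n, X i ω) / (a n * Real.sqrt n)}
                ∪ {ω | (∑ i ∈ Finset.range n, X i ω) / (a n * Real.sqrt n) ≤ -d})).toReal :=
                ENNReal.toReal_mono (measure_ne_top μ _) (measure_mono hsubset)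
          _ ≤ ((μ {ω | d ≤ (∑ i ∈ Finset.range n, X i ω) / (a n * Real.sqrt n)})
                + μ {ω | (∑ i ∈ Finset.range n, X i ω) / (a n * Real.sqrt n) ≤ -d}).toReal :=
                ENNReal.toReal_mono
                  (ENNReal.add_ne_top.2 ⟨measure_ne_top μ _, measure_ne_top μ _⟩)
                  (measure_union_le _ _)
          _ = _ := ENNReal.toReal_add (measure_ne_top μ _) (measure_ne_top μ _)
        have hlog : Real.log
            (μ {ω | (∑ i ∈ Finset.range n, X i ω) / (a n * Real.sqrt n) ∈ A}).toReal
            ≤ (-(d ^ 2) / 2 + ε) * (a n) ^ 2 := by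
          calc Real.log (μ {ω | (∑ i ∈ Finset.range n, X i ω) / (a n * Real.sqrt n) ∈ A}).toReal
              ≤ Real.log (Real.exp ((-(d ^ 2) / 2 + ε) * (a n) ^ 2)) :=
                Real.log_le_log hμpos (htre.trans hn)
          _ = (-(d ^ 2) / 2 + ε) * (a n) ^ 2 := Real.log_exp _
        rw [ENNReal.log_pos_real' hμpos, ← EReal.coe_mul, EReal.coe_le_coe_iff]
        have hap := hapos n
        have ha2 : (0:ℝ) < (a n) ^ 2 := by positivity
        calc ((a n) ^ 2)⁻¹ * Real.log
              (μ {ω | (∑ i ∈ Finset.range n, X i ω) / (a n * Real.sqrt n) ∈ A}).toReal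
            ≤ ((a n) ^ 2)⁻¹ * ((-(d ^ 2) / 2 + ε) * (a n) ^ 2) :=
              mul_le_mul_of_nonneg_left hlog (by positivity)
        _ = -(d ^ 2) / 2 + ε := by field_simp
        _ = -jr + ε := by rw [hd2]; ring
end
end

section
/- Let X_1, X_2, ... be i.i.d. real-valued random variables with E[X_1] = 0, Var(X_1) = 1, and satisfying Cramér's condition, and let (a_n) be a sequence of positive reals with a_n → ∞ and a_n/√n → 0 as n → ∞. Then for every t ∈ ℝ, lim_{n→∞} (1/a_n²) log E[exp( t (a_n/√n) Σ_{i=1}^n X_i )] = t²/2. -/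
open MeasureTheory ProbabilityTheory Filter Set

noncomputable section

lemma exp_cubic_bound (u : ℝ) (h : |u| ≤ 1) : |Real.exp u - 1 - u - u^2/2| ≤ (2/9) * |u|^3 := by
  have h3 := Real.exp_bound h (n := 3) (by norm_num)
  have hsum : ∑ m ∈ Finset.range 3, u^m/(m.factorial:ℝ) = 1 + u + u^2/2 := by
    simp [Finset.sum_range_succ, Nat.factorial]
  rw [hsum] at h3
  have : |Real.exp u - 1 - u - u^2/2| = |Real.exp u - (1 + u + u^2/2)| := by ring_nf
  rw [this]
  refine h3.trans ?_
  have : ((3:ℕ).succ : ℝ) / ((3:ℕ).factorial * (3:ℕ)) = 2/9 := by norm_num [Nat.factorial]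
  rw [this]; ring_nf; rfl

lemma exp_quad_bound (u : ℝ) (h : |u| ≤ 1) : |Real.exp u - 1 - u| ≤ u^2 := by
  have h2 := Real.exp_bound h (n := 2) (by norm_num)
  have hsum : ∑ m ∈ Finset.range 2, u^m/(m.factorial:ℝ) = 1 + u := by
    simp [Finset.sum_range_succ, Nat.factorial]
  rw [hsum] at h2
  have he : |Real.exp u - 1 - u| = |Real.exp u - (1 + u)| := by ring_nf
  rw [he]
  refine h2.trans ?_
  have : ((2:ℕ).succ : ℝ) / ((2:ℕ).factorial * (2:ℕ)) = 3/4 := by norm_num [Nat.factorial]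
  rw [this, sq_abs]; nlinarith [sq_nonneg u]

lemma exp_le_sum {c l x : ℝ} (hl : |l| ≤ c) :
    Real.exp (l * x) ≤ Real.exp (c * x) + Real.exp (-(c * x)) := by
  have h1 : l * x ≤ |l| * |x| := (le_abs_self _).trans (abs_mul l x).le
  have h2 : |l| * |x| ≤ c * |x| := mul_le_mul_of_nonneg_right hl (abs_nonneg x)
  rcases le_total 0 x with hx | hx
  · have : l * x ≤ c * x := by
      calc l * x ≤ c * |x| := h1.trans h2
        _ = c * x := by rw [abs_of_nonneg hx]
    exact (Real.exp_le_exp.2 this).trans (le_add_of_nonneg_right (Real.exp_pos _).le)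
  · have : l * x ≤ -(c * x) := by
      have : l * x ≤ c * |x| := h1.trans h2
      rwa [abs_of_nonpos hx, mul_neg] at this
    exact (Real.exp_le_exp.2 this).trans (le_add_of_nonneg_left (Real.exp_pos _).le)

lemma dom_bound {c l x : ℝ} (hl : |l| ≤ c) :
    |(Real.exp (l * x) - 1 - l * x) / l ^ 2|
      ≤ x ^ 2 * (Real.exp (c * x) + Real.exp (-(c * x)) + 2) := by
  have hE2 : (2:ℝ) ≤ Real.exp (c * x) + Real.exp (-(c * x)) + 2 := by
    nlinarith [Real.exp_pos (c*x), Real.exp_pos (-(c*x))]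
  rcases eq_or_ne l 0 with rfl | hne
  · simp only [zero_mul, Real.exp_zero]
    norm_num
    positivity
  have hl2 : (0:ℝ) < l^2 := by positivity
  rw [abs_div, abs_pow, sq_abs, div_le_iff₀ hl2]
  by_cases h1 : |l * x| ≤ 1
  · calc |Real.exp (l * x) - 1 - l * x| ≤ (l*x)^2 := exp_quad_bound _ h1
      _ = x^2 * 1 * l^2 := by ring
      _ ≤ x ^ 2 * (Real.exp (c * x) + Real.exp (-(c * x)) + 2) * l ^ 2 := by
        have hx2 : (0:ℝ) ≤ x^2 := sq_nonneg x
        have h1E : (1:ℝ) ≤ Real.exp (c * x) + Real.exp (-(c * x)) + 2 := by linarith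
        gcongr
  · push_neg at h1
    have h1' : 1 < (l*x)^2 := by nlinarith [abs_nonneg (l*x), sq_abs (l*x)]
    have hxl : 1 ≤ l^2 * x^2 := by nlinarith
    have hE : Real.exp (l*x) ≤ Real.exp (c * x) + Real.exp (-(c * x)) := exp_le_sum hl
    calc |Real.exp (l * x) - 1 - l * x| ≤ Real.exp (l*x) + 1 + |l*x| := by
          calc |Real.exp (l * x) - 1 - l * x| ≤ |Real.exp (l*x)| + |1 + l*x| := by
                have : Real.exp (l * x) - 1 - l * x = Real.exp (l*x) - (1 + l*x) := by ring
                rw [this]; exact (abs_sub _ _)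
            _ ≤ Real.exp (l*x) + (1 + |l*x|) := by
                refine add_le_add (le_of_eq (abs_of_pos (Real.exp_pos _))) ?_
                exact (abs_add_le 1 (l*x)).trans (by simp)
            _ = Real.exp (l*x) + 1 + |l*x| := by ring
      _ ≤ x ^ 2 * (Real.exp (c * x) + Real.exp (-(c * x)) + 2) * l ^ 2 := by
          have habs : |l*x| ≤ l^2 * x^2 := by
            nlinarith [sq_abs (l*x), abs_nonneg (l*x)]
          have hexp_pos : 0 < Real.exp (l*x) := Real.exp_pos _
          nlinarith [sq_nonneg x, Real.exp_pos (c*x), Real.exp_pos (-(c*x)),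
            mul_le_mul_of_nonneg_left hE (mul_nonneg (sq_nonneg x) (sq_nonneg l))]

lemma tendsto_quot (x : ℝ) {l : ℕ → ℝ} (hl0 : Tendsto l atTop (nhds 0))
    (hne : ∀ᶠ n in atTop, l n ≠ 0) :
    Tendsto (fun n => (Real.exp (l n * x) - 1 - l n * x) / (l n) ^ 2) atTop
      (nhds (x ^ 2 / 2)) := by
  rw [← tendsto_sub_nhds_zero_iff]
  refine squeeze_zero_norm' (a := fun n => (2/9) * |x|^3 * |l n|) ?_ ?_
  · have hsmall : ∀ᶠ n in atTop, |l n| ≤ 1 / (|x| + 1) := by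
      have hx1 : (0:ℝ) < 1 / (|x| + 1) := by positivity
      exact (hl0.eventually (eventually_abs_sub_lt 0 hx1)).mono fun n h => by
        simpa using h.le
    filter_upwards [hsmall, hne] with n hs hn
    have hux : |l n * x| ≤ 1 := by
      rw [abs_mul]
      calc |l n| * |x| ≤ (1/(|x|+1)) * |x| := by
            exact mul_le_mul_of_nonneg_right hs (abs_nonneg x)
        _ ≤ 1 := by
            rw [div_mul_eq_mul_div, div_le_one (by positivity)]
            linarith [abs_nonneg x]
    have hl2 : (0:ℝ) < (l n)^2 := by positivity
    have key : (Real.exp (l n * x) - 1 - l n * x) / (l n) ^ 2 - x ^ 2 / 2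
        = (Real.exp (l n * x) - 1 - l n * x - (l n * x)^2/2) / (l n)^2 := by
      field_simp
    rw [Real.norm_eq_abs, key, abs_div, abs_pow, sq_abs]
    rw [div_le_iff₀ hl2]
    calc |Real.exp (l n * x) - 1 - l n * x - (l n * x)^2/2| ≤ (2/9) * |l n * x|^3 :=
          exp_cubic_bound _ hux
      _ = (2/9) * |x|^3 * |l n| * (l n)^2 := by
          rw [abs_mul, mul_pow]
          have h3 : |l n|^3 = |l n| * (l n)^2 := by
            rw [pow_succ, sq_abs]; ring
          rw [h3]; ring
  · have : Tendsto (fun n => |l n|) atTop (nhds 0) := by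
      simpa using hl0.abs
    simpa using (this.const_mul ((2/9) * |x|^3))

lemma sq_le_exp_sum {c : ℝ} (hc : 0 < c) (y : ℝ) :
    y ^ 2 ≤ (4 / c ^ 2) * (Real.exp (c * y) + Real.exp (-(c * y))) := by
  have h2 : 1 + c * |y| / 2 ≤ Real.exp (c * |y| / 2) := by
    have := Real.add_one_le_exp (c * |y| / 2); linarith
  have hv : 0 ≤ c * |y| := mul_nonneg hc.le (abs_nonneg y)
  have h1 : (c * |y| / 2) ^ 2 ≤ Real.exp (c * |y|) := by
    have he : Real.exp (c * |y| / 2) ^ 2 = Real.exp (c * |y|) := by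
      rw [sq, ← Real.exp_add]; ring_nf
    nlinarith [Real.exp_pos (c * |y| / 2)]
  have h3 : Real.exp (c * |y|) ≤ Real.exp (c * y) + Real.exp (-(c * y)) := by
    rcases le_total 0 y with hy | hy
    · rw [abs_of_nonneg hy]
      exact le_add_of_nonneg_right (Real.exp_pos _).le
    · rw [abs_of_nonpos hy, mul_neg]
      exact le_add_of_nonneg_left (Real.exp_pos _).le
  have hc2 : (0:ℝ) < c ^ 2 := by positivity
  have h4 : (c * |y| / 2)^2 = c^2 * y^2 / 4 := by
    rw [div_pow, mul_pow, sq_abs]; ring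
  rw [h4] at h1
  have h5 : c ^ 2 * y ^ 2 / 4 ≤ Real.exp (c * y) + Real.exp (-(c * y)) := h1.trans h3
  have h6 : (4 / c ^ 2) * (c ^ 2 * y ^ 2 / 4) = y ^ 2 := by field_simp
  nlinarith [mul_le_mul_of_nonneg_left h5 (le_of_lt (by positivity : (0:ℝ) < 4 / c ^ 2))]

/-- **Logarithmic moment generating function limit for i.i.d. sums.** Under the hypotheses of
the i.i.d. MDP (centered, unit variance, Cramér's condition, `aₙ → ∞`, `aₙ/√n → 0`), for every
`t` the normalized log-Laplace transform of `t (aₙ/√n) ∑_{i<n} Xᵢ` converges to `t²/2`. -/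
theorem limit_log_mgf_iid_sums {Ω : Type*} [MeasurableSpace Ω] (μ : Measure Ω)
    [IsProbabilityMeasure μ]
    (X : ℕ → Ω → ℝ) (hmeas : ∀ i, Measurable (X i))
    (hindep : iIndepFun X μ)
    (hident : ∀ i, IdentDistrib (X i) (X 0) μ μ)
    (hmean : μ[X 0] = 0) (hvar : variance (X 0) μ = 1)
    (hcramer : ∃ D > (0 : ℝ), ∀ l : ℝ, |l| < D → Integrable (fun ω => Real.exp (l * X 0 ω)) μ)
    (a : ℕ → ℝ) (hapos : ∀ n, 0 < a n) (hatop : Tendsto a atTop atTop)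
    (haslow : Tendsto (fun n => a n / Real.sqrt n) atTop (nhds 0)) (t : ℝ) :
    Tendsto
      (fun n => (1 / (a n) ^ 2) *
        Real.log (∫ ω, Real.exp (t * (a n / Real.sqrt n) * ∑ i ∈ Finset.range n, X i ω) ∂μ))
      atTop (nhds (t ^ 2 / 2)) := by
  rcases eq_or_ne t 0 with rfl | ht
  · have h0 : ∀ n : ℕ, (1 / (a n) ^ 2) *
        Real.log (∫ ω, Real.exp (0 * (a n / Real.sqrt n) * ∑ i ∈ Finset.range n, X i ω) ∂μ)
        = 0 := by intro n; simp
    rw [show ((0:ℝ) ^ 2 / 2) = 0 by norm_num]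
    exact tendsto_const_nhds.congr fun n => (h0 n).symm
  obtain ⟨D, hD, hint⟩ := hcramer
  set c : ℝ := D / 3 with hc_def
  have hc : 0 < c := by positivity
  have hm0 := hmeas 0
  have hint' : ∀ s : ℝ, |s| ≤ 2 * c → Integrable (fun ω => Real.exp (s * X 0 ω)) μ := by
    intro s hs
    refine hint s (lt_of_le_of_lt hs ?_)
    rw [hc_def]; linarith
  set L : ℕ → ℝ := fun n => t * (a n / Real.sqrt n) with hL_def
  have hL0 : Tendsto L atTop (nhds 0) := by
    have := haslow.const_mul t
    simpa using this
  have hLne : ∀ n : ℕ, 1 ≤ n → L n ≠ 0 := by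
    intro n hn
    have hn' : (0:ℝ) < (n:ℝ) := by exact_mod_cast hn
    have h1 : (0:ℝ) < Real.sqrt n := Real.sqrt_pos.2 hn'
    exact mul_ne_zero ht (div_ne_zero (hapos n).ne' h1.ne')
  -- basic integrability
  have hint_c : Integrable (fun ω => Real.exp (c * X 0 ω)) μ :=
    hint' c (by rw [abs_of_pos hc]; linarith)
  have hint_negc : Integrable (fun ω => Real.exp (-(c * X 0 ω))) μ := by
    have := hint' (-c) (by rw [abs_neg, abs_of_pos hc]; linarith)
    simpa [neg_mul] using this
  have hint_2c : Integrable (fun ω => Real.exp (2 * c * X 0 ω)) μ :=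
    hint' (2 * c) (by rw [abs_of_pos (by linarith)])
  have hint_neg2c : Integrable (fun ω => Real.exp (-(2 * c * X 0 ω))) μ := by
    have := hint' (-(2 * c)) (by rw [abs_neg, abs_of_pos (by linarith)])
    simpa [neg_mul] using this
  have hX2_int : Integrable (fun ω => (X 0 ω) ^ 2) μ := by
    refine Integrable.mono' ((hint_c.add hint_negc).const_mul (4 / c ^ 2)) ?_ ?_
    · exact (hm0.pow_const 2).aestronglyMeasurable
    · refine Eventually.of_forall fun ω => ?_
      rw [Real.norm_eq_abs, abs_of_nonneg (sq_nonneg _)]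
      exact sq_le_exp_sum hc (X 0 ω)
  have hmemLp2 : MemLp (X 0) 2 μ :=
    (memLp_two_iff_integrable_sq hm0.aestronglyMeasurable).2 hX2_int
  have hX_int : Integrable (X 0) μ := hmemLp2.integrable one_le_two
  have hEX2 : ∫ ω, (X 0 ω) ^ 2 ∂μ = 1 := by
    have hv := variance_eq_sub hmemLp2
    rw [hvar, hmean] at hv
    have : μ[(X 0) ^ 2] = ∫ ω, (X 0 ω) ^ 2 ∂μ := by
      congr 1
    rw [this] at hv
    linarith [hv]
  -- dominating function
  set G : Ω → ℝ := fun ω => (4 / c ^ 2) * (Real.exp (2 * c * X 0 ω) + Real.exp (-(2 * c * X 0 ω))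
      + 2 + 2 * Real.exp (c * X 0 ω) + 2 * Real.exp (-(c * X 0 ω))) with hG_def
  have hG_int : Integrable G μ := by
    refine Integrable.const_mul ?_ _
    exact ((((hint_2c.add hint_neg2c).add (integrable_const 2)).add
      (hint_c.const_mul 2)).add (hint_negc.const_mul 2))
  have hG_dom : ∀ ω, (X 0 ω) ^ 2 * (Real.exp (c * X 0 ω) + Real.exp (-(c * X 0 ω)) + 2) ≤ G ω := by
    intro ω
    set y := X 0 ω
    have h1 : y ^ 2 ≤ (4 / c ^ 2) * (Real.exp (c * y) + Real.exp (-(c * y))) := sq_le_exp_sum hc y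
    have hA : Real.exp (c * y) * Real.exp (c * y) = Real.exp (2 * c * y) := by
      rw [← Real.exp_add]; ring_nf
    have hB : Real.exp (-(c * y)) * Real.exp (-(c * y)) = Real.exp (-(2 * c * y)) := by
      rw [← Real.exp_add]; ring_nf
    have hAB : Real.exp (c * y) * Real.exp (-(c * y)) = 1 := by
      rw [← Real.exp_add]; simp
    have hpos : (0:ℝ) < Real.exp (c * y) + Real.exp (-(c * y)) + 2 := by positivity
    rw [hG_def]
    simp only
    nlinarith [Real.exp_pos (c * y), Real.exp_pos (-(c * y)), sq_nonneg y,
      mul_le_mul_of_nonneg_right h1 hpos.le]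
  -- dominated convergence
  set r : ℕ → ℝ := fun n => ∫ ω, (Real.exp (L n * X 0 ω) - 1 - L n * X 0 ω) / (L n) ^ 2 ∂μ
    with hr_def
  have hLc : ∀ᶠ n in atTop, |L n| ≤ c := by
    have := hL0.eventually (eventually_abs_sub_lt 0 hc)
    exact this.mono fun n h => by simpa using h.le
  have hLD : ∀ᶠ n in atTop, |L n| < D := by
    have := hL0.eventually (eventually_abs_sub_lt 0 hD)
    exact this.mono fun n h => by simpa using h
  have hr_half : Tendsto r atTop (nhds (1 / 2)) := by
    have hDCT := tendsto_integral_filter_of_dominated_convergence (μ := μ) (l := atTop)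
      (F := fun n ω => (Real.exp (L n * X 0 ω) - 1 - L n * X 0 ω) / (L n) ^ 2)
      (f := fun ω => (X 0 ω) ^ 2 / 2)
      (fun ω => (X 0 ω) ^ 2 * (Real.exp (c * X 0 ω) + Real.exp (-(c * X 0 ω)) + 2))
      (Eventually.of_forall fun n =>
        ((((Real.measurable_exp.comp (hm0.const_mul (L n))).sub measurable_const).sub
          (hm0.const_mul (L n))).div_const _).aestronglyMeasurable)
      (by
        filter_upwards [hLc] with n hn
        refine Eventually.of_forall fun ω => ?_
        rw [Real.norm_eq_abs]
        exact dom_bound hn)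
      (by
        refine hG_int.mono' ?_ (Eventually.of_forall fun ω => ?_)
        · exact ((hm0.pow_const 2).mul (((Real.measurable_exp.comp (hm0.const_mul c)).add
            (Real.measurable_exp.comp (hm0.const_mul c).neg)).add
            measurable_const)).aestronglyMeasurable
        · rw [Real.norm_eq_abs, abs_of_nonneg (by positivity)]
          exact hG_dom ω)
      (Eventually.of_forall fun ω =>
        tendsto_quot (X 0 ω) hL0 ((eventually_ge_atTop 1).mono hLne))
    have hint_f : ∫ ω, (X 0 ω) ^ 2 / 2 ∂μ = 1 / 2 := by
      rw [integral_div, hEX2]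
    rw [hint_f] at hDCT
    exact hDCT
  -- mgf identity
  have hmgf : ∀ n : ℕ,
      ∫ ω, Real.exp (t * (a n / Real.sqrt n) * ∑ i ∈ Finset.range n, X i ω) ∂μ
        = (mgf (X 0) μ (L n)) ^ n := by
    intro n
    have h1 : ∫ ω, Real.exp (t * (a n / Real.sqrt n) * ∑ i ∈ Finset.range n, X i ω) ∂μ
        = mgf (∑ i ∈ Finset.range n, X i) μ (L n) := by
      simp only [mgf, Finset.sum_apply]
      rfl
    rw [h1, hindep.mgf_sum hmeas]
    have h2 : ∀ i ∈ Finset.range n, mgf (X i) μ (L n) = mgf (X 0) μ (L n) := by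
      intro i _
      have hexp_meas : Measurable fun y : ℝ => Real.exp (L n * y) :=
        Real.measurable_exp.comp (measurable_id.const_mul (L n))
      have := ((hident i).comp hexp_meas).integral_eq
      simpa [mgf, Function.comp] using this
    rw [Finset.prod_congr rfl h2, Finset.prod_const, Finset.card_range]
  -- expansion of mgf
  set u : ℕ → ℝ := fun n => (L n) ^ 2 * r n with hu_def
  have hrpos : ∀ᶠ n in atTop, 0 < r n :=
    hr_half.eventually (eventually_gt_nhds (by norm_num : (0:ℝ) < 1 / 2))
  have hm_eq : ∀ᶠ n in atTop, mgf (X 0) μ (L n) = 1 + u n := by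
    filter_upwards [hLD, eventually_ge_atTop 1] with n hld h1
    have hIexp : Integrable (fun ω => Real.exp (L n * X 0 ω)) μ := hint _ hld
    have hLn := hLne n h1
    have hstep : ∀ ω, (L n) ^ 2 * ((Real.exp (L n * X 0 ω) - 1 - L n * X 0 ω) / (L n) ^ 2)
        = Real.exp (L n * X 0 ω) - 1 - L n * X 0 ω := by
      intro ω; field_simp
    have hu_eq : u n = ∫ ω, (Real.exp (L n * X 0 ω) - 1 - L n * X 0 ω) ∂μ := by
      rw [hu_def]
      simp only
      rw [hr_def]
      simp only
      rw [← integral_const_mul]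
      exact integral_congr_ae (Eventually.of_forall fun ω => hstep ω)
    have hint1 : ∫ ω, (Real.exp (L n * X 0 ω) - 1 - L n * X 0 ω) ∂μ
        = mgf (X 0) μ (L n) - 1 - 0 := by
      have e1 : ∫ ω, (Real.exp (L n * X 0 ω) - 1 - L n * X 0 ω) ∂μ
          = ∫ ω, (Real.exp (L n * X 0 ω) - 1) ∂μ - ∫ ω, L n * X 0 ω ∂μ :=
        integral_sub (hIexp.sub (integrable_const 1)) (hX_int.const_mul (L n))
      have e2 : ∫ ω, (Real.exp (L n * X 0 ω) - 1) ∂μ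
          = (∫ ω, Real.exp (L n * X 0 ω) ∂μ) - ∫ (_ : Ω), (1:ℝ) ∂μ :=
        integral_sub hIexp (integrable_const 1)
      have e3 : ∫ ω, L n * X 0 ω ∂μ = L n * ∫ ω, X 0 ω ∂μ := integral_const_mul _ _
      rw [e1, e2, e3, hmean]
      simp [mgf]
    rw [hu_eq, hint1]
    ring
  -- slope limit
  have hu0 : Tendsto u atTop (nhds 0) := by
    have := (hL0.pow 2).mul hr_half
    simpa using this
  have hune : ∀ᶠ n in atTop, u n ≠ 0 := by
    filter_upwards [eventually_ge_atTop 1, hrpos] with n h1 h2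
    exact mul_ne_zero (pow_ne_zero _ (hLne n h1)) h2.ne'
  have hslope : Tendsto (fun n => Real.log (1 + u n) / u n) atTop (nhds 1) := by
    have hd : HasDerivAt Real.log 1 1 := by simpa using Real.hasDerivAt_log one_ne_zero
    have hs := hasDerivAt_iff_tendsto_slope.mp hd
    have hcomp : Tendsto (fun n => 1 + u n) atTop (nhdsWithin 1 {(1:ℝ)}ᶜ) := by
      rw [tendsto_nhdsWithin_iff]
      constructor
      · simpa using (tendsto_const_nhds.add hu0)
      · filter_upwards [hune] with n hn
        simp [hn]
    have hfinal := hs.comp hcomp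
    refine hfinal.congr fun n => ?_
    simp [slope_def_field, Real.log_one, Function.comp]
  -- final assembly
  have heq : ∀ᶠ n in atTop,
      t ^ 2 * (Real.log (1 + u n) / u n * r n)
        = (1 / (a n) ^ 2) *
          Real.log (∫ ω, Real.exp (t * (a n / Real.sqrt n) * ∑ i ∈ Finset.range n, X i ω) ∂μ) := by
    filter_upwards [hm_eq, eventually_ge_atTop 1, hrpos] with n hme h1 hrp
    rw [hmgf n, Real.log_pow, hme]
    have hn' : (0:ℝ) < (n:ℝ) := by exact_mod_cast h1
    have hLsq : (L n) ^ 2 = t ^ 2 * (a n) ^ 2 / n := by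
      rw [hL_def]
      simp only
      rw [mul_pow, div_pow, Real.sq_sqrt (Nat.cast_nonneg n)]
      ring
    rw [hu_def]
    simp only
    rw [hLsq]
    have ha := (hapos n).ne'
    field_simp
  have hlim : Tendsto (fun n => t ^ 2 * (Real.log (1 + u n) / u n * r n)) atTop
      (nhds (t ^ 2 / 2)) := by
    have := (hslope.mul hr_half).const_mul (t ^ 2)
    have h12 : t ^ 2 * (1 * (1 / 2)) = t ^ 2 / 2 := by ring
    rwa [h12] at this
  exact hlim.congr' heq
end
end

section
/- Let X be a real-valued random variable with E[X] = 0, Var(X) = 1, and log E[exp(λ X)] < ∞ for all λ in some interval (−D, D) with D > 0, and let Z be a standard Gaussian random variable. Let (a_n) be a sequence of positive reals with a_n → ∞ and a_n/√n → 0 as n → ∞. Then for every t ∈ ℝ there exist a constant C > 0 and N ∈ ℕ such that for all n ≥ N, | E[exp(t (a_n/√n) X)] − E[exp(t (a_n/√n) Z)] | ≤ C a_n³ / n^{3/2}. -/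
open MeasureTheory ProbabilityTheory Filter Set
open scoped NNReal ENNReal

noncomputable section

lemma exp_taylor1 (x : ℝ) : |Real.exp x - 1| ≤ |x| * Real.exp |x| := by
  rcases le_or_gt 0 x with hx | hx
  · rw [abs_of_nonneg hx, abs_of_nonneg (by linarith [Real.one_le_exp hx])]
    have h1 := Real.add_one_le_exp (-x)
    have h2 := mul_le_mul_of_nonneg_right h1 (le_of_lt (Real.exp_pos x))
    rw [Real.exp_neg, inv_mul_cancel₀ (ne_of_gt (Real.exp_pos x))] at h2
    nlinarith
  · rw [abs_of_neg hx, abs_of_nonpos (by linarith [Real.exp_lt_one_iff.mpr hx] : Real.exp x - 1 ≤ 0)]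
    nlinarith [Real.add_one_le_exp x, Real.one_le_exp (le_of_lt (neg_pos.mpr hx))]

lemma abs_le_abs_of_uIoc {x v : ℝ} (hv : v ∈ Set.uIoc (0:ℝ) x) : |v| ≤ |x| := by
  rcases le_total 0 x with h | h
  · rw [Set.uIoc_of_le h] at hv
    rw [abs_of_pos hv.1, abs_of_nonneg h]; exact hv.2
  · rw [Set.uIoc_comm, Set.uIoc_of_le h] at hv
    rw [abs_of_nonpos hv.2, abs_of_nonpos h]; linarith [hv.1]

lemma exp_taylor2 (x : ℝ) : |Real.exp x - 1 - x| ≤ |x| ^ 2 * Real.exp |x| := by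
  have h : ∫ v in (0:ℝ)..x, (Real.exp v - 1) = Real.exp x - 1 - x := by
    rw [intervalIntegral.integral_sub (Real.continuous_exp.intervalIntegrable _ _)
      (intervalIntegrable_const), integral_exp, intervalIntegral.integral_const]
    simp
  have hb : ∀ v ∈ Set.uIoc (0:ℝ) x, ‖Real.exp v - 1‖ ≤ |x| * Real.exp |x| := by
    intro v hv
    have hvx : |v| ≤ |x| := abs_le_abs_of_uIoc hv
    calc ‖Real.exp v - 1‖ ≤ |v| * Real.exp |v| := exp_taylor1 v
      _ ≤ |x| * Real.exp |x| :=
          mul_le_mul hvx (Real.exp_le_exp.mpr hvx) (le_of_lt (Real.exp_pos _)) (abs_nonneg x)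
  calc |Real.exp x - 1 - x| = ‖∫ v in (0:ℝ)..x, (Real.exp v - 1)‖ := by rw [h]; rfl
    _ ≤ (|x| * Real.exp |x|) * |x - 0| := intervalIntegral.norm_integral_le_of_norm_le_const hb
    _ = |x| ^ 2 * Real.exp |x| := by rw [sub_zero]; ring

lemma exp_taylor3 (x : ℝ) : |Real.exp x - 1 - x - x ^ 2 / 2| ≤ |x| ^ 3 * Real.exp |x| := by
  have h : ∫ v in (0:ℝ)..x, (Real.exp v - 1 - v) = Real.exp x - 1 - x - x ^ 2 / 2 := by
    rw [intervalIntegral.integral_sub (IntervalIntegrable.sub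
      (Real.continuous_exp.intervalIntegrable _ _) intervalIntegrable_const)
      (continuous_id'.intervalIntegrable _ _),
      intervalIntegral.integral_sub (Real.continuous_exp.intervalIntegrable _ _)
      (intervalIntegrable_const), integral_exp, intervalIntegral.integral_const,
      integral_id]
    norm_num

  have hb : ∀ v ∈ Set.uIoc (0:ℝ) x, ‖Real.exp v - 1 - v‖ ≤ |x| ^ 2 * Real.exp |x| := by
    intro v hv
    have hvx : |v| ≤ |x| := abs_le_abs_of_uIoc hv
    calc ‖Real.exp v - 1 - v‖ ≤ |v| ^ 2 * Real.exp |v| := exp_taylor2 v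
      _ ≤ |x| ^ 2 * Real.exp |x| :=
          mul_le_mul (pow_le_pow_left₀ (abs_nonneg v) hvx 2) (Real.exp_le_exp.mpr hvx)
            (le_of_lt (Real.exp_pos _)) (by positivity)
  calc |Real.exp x - 1 - x - x ^ 2 / 2| = ‖∫ v in (0:ℝ)..x, (Real.exp v - 1 - v)‖ := by rw [h]; rfl
    _ ≤ (|x| ^ 2 * Real.exp |x|) * |x - 0| := intervalIntegral.norm_integral_le_of_norm_le_const hb
    _ = |x| ^ 3 * Real.exp |x| := by rw [sub_zero]; ring

lemma integral_exp_gaussian (s : ℝ) :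
    ∫ z, Real.exp (s * z) ∂(gaussianReal 0 1) = Real.exp (s ^ 2 / 2) := by
  rw [gaussianReal_of_var_ne_zero 0 one_ne_zero]
  have hpdf : gaussianPDF 0 1 = fun x => ((Real.toNNReal (gaussianPDFReal 0 1 x) : ℝ≥0) : ℝ≥0∞) := by
    funext x; rw [gaussianPDF]; rfl
  rw [hpdf, integral_withDensity_eq_integral_smul
    ((measurable_gaussianPDFReal 0 1).real_toNNReal) (fun z => Real.exp (s * z))]
  have key : ∀ z : ℝ, (Real.toNNReal (gaussianPDFReal 0 1 z) : ℝ≥0) • Real.exp (s * z)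
      = Real.exp (s ^ 2 / 2) * gaussianPDFReal s 1 z := by
    intro z
    rw [NNReal.smul_def, smul_eq_mul, Real.coe_toNNReal _ (gaussianPDFReal_nonneg 0 1 z)]
    simp only [gaussianPDFReal, NNReal.coe_one, mul_one, sub_zero]
    rw [mul_assoc, ← Real.exp_add, mul_comm (Real.exp (s ^ 2 / 2)), mul_assoc, ← Real.exp_add]
    congr 2
    ring
  simp_rw [key]
  rw [integral_const_mul, integral_gaussianPDFReal_eq_one s one_ne_zero, mul_one]

lemma cube_le_exp {y : ℝ} (hy : 0 ≤ y) : y ^ 3 ≤ 27 * Real.exp y := by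
  have h0 : (0:ℝ) ≤ y / 3 + 1 := by linarith
  have h1 : (y / 3 + 1) ^ 3 ≤ Real.exp (y / 3) ^ 3 :=
    pow_le_pow_left₀ h0 (by linarith [Real.add_one_le_exp (y / 3)]) 3
  have h2 : Real.exp (y / 3) ^ 3 = Real.exp y := by
    rw [← Real.exp_nat_mul]; congr 1; push_cast; ring
  nlinarith [sq_nonneg y, sq_nonneg (y/3)]

lemma sq_le_exp {y : ℝ} (hy : 0 ≤ y) : y ^ 2 ≤ 4 * Real.exp y := by
  have h0 : (0:ℝ) ≤ y / 2 + 1 := by linarith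
  have h1 : (y / 2 + 1) ^ 2 ≤ Real.exp (y / 2) ^ 2 :=
    pow_le_pow_left₀ h0 (by linarith [Real.add_one_le_exp (y / 2)]) 2
  have h2 : Real.exp (y / 2) ^ 2 = Real.exp y := by
    rw [← Real.exp_nat_mul]; congr 1; push_cast; ring
  nlinarith

set_option maxHeartbeats 1000000 in
/-- **Lindeberg replacement estimate.** If `X` is centered with unit variance and a locally
finite moment generating function, `Z` is standard Gaussian, and `aₙ → ∞` with `aₙ/√n → 0`,
then for every `t` the exponential moments of `t (aₙ/√n) X` and `t (aₙ/√n) Z` differ by at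
most `C aₙ³ / n^{3/2}` for all large `n`. -/
theorem lindeberg_replacement_estimate
    {Ω Ω' : Type*} [MeasurableSpace Ω] [MeasurableSpace Ω']
    (μ : Measure Ω) [IsProbabilityMeasure μ] (μ' : Measure Ω') [IsProbabilityMeasure μ']
    (X : Ω → ℝ) (hXmeas : Measurable X)
    (hmean : μ[X] = 0) (hvar : variance X μ = 1)
    (hcramer : ∃ D > (0 : ℝ), ∀ l : ℝ, |l| < D → Integrable (fun ω => Real.exp (l * X ω)) μ)
    (Z : Ω' → ℝ) (hZmeas : Measurable Z) (hZ : Measure.map Z μ' = gaussianReal 0 1)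
    (a : ℕ → ℝ) (hapos : ∀ n, 0 < a n) (hatop : Tendsto a atTop atTop)
    (haslow : Tendsto (fun n => a n / Real.sqrt n) atTop (nhds 0)) (t : ℝ) :
    ∃ C > (0 : ℝ), ∃ N : ℕ, ∀ n ≥ N,
      |(∫ ω, Real.exp (t * (a n / Real.sqrt n) * X ω) ∂μ) -
        ∫ ω, Real.exp (t * (a n / Real.sqrt n) * Z ω) ∂μ'| ≤
      C * (a n) ^ 3 / (n : ℝ) ^ ((3 : ℝ) / 2) := by
  obtain ⟨D, hD, hint⟩ := hcramer
  set b : ℝ := min (D / 2) 1 with hbdef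
  have hb : 0 < b := lt_min (by linarith) one_pos
  have hbD : b ≤ D / 2 := min_le_left _ _
  have hb1 : b ≤ 1 := min_le_right _ _
  -- integrability of exp (c * |X|)
  have hexpabs : ∀ c : ℝ, 0 ≤ c → c < D → Integrable (fun ω => Real.exp (c * |X ω|)) μ := by
    intro c hc hcD
    have h1 : Integrable (fun ω => Real.exp (c * X ω) + Real.exp (-c * X ω)) μ := by
      refine (hint c (by rwa [abs_of_nonneg hc])).add (hint (-c) ?_)
      rwa [abs_neg, abs_of_nonneg hc]
    refine h1.mono' ?_ (Filter.Eventually.of_forall fun ω => ?_)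
    · exact (Real.measurable_exp.comp (measurable_const.mul hXmeas.abs)).aestronglyMeasurable
    · rw [Real.norm_eq_abs, abs_of_pos (Real.exp_pos _)]
      rcases le_total 0 (X ω) with h | h
      · rw [abs_of_nonneg h]
        linarith [Real.exp_pos (-c * X ω)]
      · rw [abs_of_nonpos h]
        have : c * -X ω = -c * X ω := by ring
        rw [this]
        linarith [Real.exp_pos (c * X ω)]
  -- integrable |X|^3 * exp (b |X|)
  have hbound3 : Integrable (fun ω => |X ω| ^ 3 * Real.exp (b * |X ω|)) μ := by
    have hc : 0 ≤ D / 4 + b := by linarith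
    have hcD : D / 4 + b < D := by
      have : b ≤ D / 2 := hbD; linarith
    refine ((hexpabs (D / 4 + b) hc hcD).const_mul (27 * (4 / D) ^ 3)).mono'
      ((((hXmeas.abs.pow_const 3).mul
        (Real.measurable_exp.comp (measurable_const.mul hXmeas.abs)))).aestronglyMeasurable)
      (Filter.Eventually.of_forall fun ω => ?_)
    rw [Real.norm_eq_abs, abs_of_nonneg (by positivity)]
    have h1 : (D / 4 * |X ω|) ^ 3 ≤ 27 * Real.exp (D / 4 * |X ω|) :=
      cube_le_exp (by positivity)
    have h2 : |X ω| ^ 3 ≤ 27 * (4 / D) ^ 3 * Real.exp (D / 4 * |X ω|) := by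
      have hD4 : (0:ℝ) < (D / 4) ^ 3 := by positivity
      have : (D / 4) ^ 3 * |X ω| ^ 3 ≤ 27 * Real.exp (D / 4 * |X ω|) := by
        calc (D / 4) ^ 3 * |X ω| ^ 3 = (D / 4 * |X ω|) ^ 3 := by ring
          _ ≤ 27 * Real.exp (D / 4 * |X ω|) := h1
      calc |X ω| ^ 3 = ((D / 4) ^ 3 * |X ω| ^ 3) / (D / 4) ^ 3 := by field_simp
        _ ≤ (27 * Real.exp (D / 4 * |X ω|)) / (D / 4) ^ 3 :=
            div_le_div_of_nonneg_right this hD4.le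
        _ = 27 * (4 / D) ^ 3 * Real.exp (D / 4 * |X ω|) := by field_simp
    calc |X ω| ^ 3 * Real.exp (b * |X ω|)
        ≤ (27 * (4 / D) ^ 3 * Real.exp (D / 4 * |X ω|)) * Real.exp (b * |X ω|) :=
          mul_le_mul_of_nonneg_right h2 (le_of_lt (Real.exp_pos _))
      _ = 27 * (4 / D) ^ 3 * Real.exp ((D / 4 + b) * |X ω|) := by
          rw [mul_assoc, ← Real.exp_add]; ring_nf
  -- integrable X^2
  have hX2 : Integrable (fun ω => X ω ^ 2) μ := by
    refine ((hexpabs (D / 2) (by linarith) (by linarith)).const_mul (4 * (2 / D) ^ 2)).mono'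
      ((hXmeas.pow_const 2).aestronglyMeasurable) (Filter.Eventually.of_forall fun ω => ?_)
    rw [Real.norm_eq_abs, abs_of_nonneg (by positivity)]
    have h1 : (D / 2 * |X ω|) ^ 2 ≤ 4 * Real.exp (D / 2 * |X ω|) := sq_le_exp (by positivity)
    have hD2 : (0:ℝ) < (D / 2) ^ 2 := by positivity
    have h3 : X ω ^ 2 = |X ω| ^ 2 := (sq_abs _).symm
    rw [h3]
    calc |X ω| ^ 2 = ((D / 2) ^ 2 * |X ω| ^ 2) / (D / 2) ^ 2 := by field_simp
      _ ≤ (4 * Real.exp (D / 2 * |X ω|)) / (D / 2) ^ 2 := by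
          apply div_le_div_of_nonneg_right _ hD2.le
          calc (D / 2) ^ 2 * |X ω| ^ 2 = (D / 2 * |X ω|) ^ 2 := by ring
            _ ≤ 4 * Real.exp (D / 2 * |X ω|) := h1
      _ = 4 * (2 / D) ^ 2 * Real.exp (D / 2 * |X ω|) := by field_simp
  have hXmem : MemLp X 2 μ := (memLp_two_iff_integrable_sq hXmeas.aestronglyMeasurable).mpr hX2
  have hX1 : Integrable X μ := hXmem.integrable (by norm_num)
  have hEX2 : ∫ ω, X ω ^ 2 ∂μ = 1 := by
    have h := variance_eq_sub hXmem
    rw [hmean] at h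
    simp only [Pi.pow_apply] at h
    rw [hvar] at h
    linarith
  set M : ℝ := ∫ ω, |X ω| ^ 3 * Real.exp (b * |X ω|) ∂μ with hMdef
  have hM0 : 0 ≤ M := integral_nonneg fun ω => by positivity
  -- key estimate for X side
  have hkey : ∀ s : ℝ, |s| ≤ b →
      |(∫ ω, Real.exp (s * X ω) ∂μ) - (1 + s ^ 2 / 2)| ≤ M * |s| ^ 3 := by
    intro s hs
    have hsD : |s| < D := lt_of_le_of_lt hs (lt_of_le_of_lt hbD (by linarith))
    have hie : Integrable (fun ω => Real.exp (s * X ω)) μ := hint s hsD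
    have i1 : Integrable (fun ω : Ω => s * X ω) μ := hX1.const_mul s
    have i2 : Integrable (fun ω : Ω => s ^ 2 / 2 * X ω ^ 2) μ := hX2.const_mul _
    have i12 : Integrable (fun ω : Ω => 1 + s * X ω) μ := (integrable_const 1).add i1
    have i3 : Integrable (fun ω : Ω => 1 + s * X ω + s ^ 2 / 2 * X ω ^ 2) μ := i12.add i2
    have hsplit : ∫ ω, (Real.exp (s * X ω) - (1 + s * X ω + s ^ 2 / 2 * X ω ^ 2)) ∂μ
        = (∫ ω, Real.exp (s * X ω) ∂μ) - (1 + s ^ 2 / 2) := by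
      rw [integral_sub hie i3, integral_add i12 i2, integral_add (integrable_const 1) i1,
        integral_const_mul, integral_const_mul, hmean, hEX2, integral_const]
      simp [measure_univ]
    have hpt : ∀ ω, ‖Real.exp (s * X ω) - (1 + s * X ω + s ^ 2 / 2 * X ω ^ 2)‖
        ≤ |s| ^ 3 * (|X ω| ^ 3 * Real.exp (b * |X ω|)) := by
      intro ω
      have h1 := exp_taylor3 (s * X ω)
      have h2 : Real.exp (s * X ω) - 1 - s * X ω - (s * X ω) ^ 2 / 2
          = Real.exp (s * X ω) - (1 + s * X ω + s ^ 2 / 2 * X ω ^ 2) := by ring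
      rw [h2] at h1
      rw [Real.norm_eq_abs]
      refine h1.trans ?_
      rw [abs_mul, mul_pow]
      have h3 : Real.exp (|s| * |X ω|) ≤ Real.exp (b * |X ω|) :=
        Real.exp_le_exp.mpr (mul_le_mul_of_nonneg_right hs (abs_nonneg _))
      calc |s| ^ 3 * |X ω| ^ 3 * Real.exp (|s| * |X ω|)
          ≤ |s| ^ 3 * |X ω| ^ 3 * Real.exp (b * |X ω|) := by
            apply mul_le_mul_of_nonneg_left h3 (by positivity)
        _ = |s| ^ 3 * (|X ω| ^ 3 * Real.exp (b * |X ω|)) := by ring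
    calc |(∫ ω, Real.exp (s * X ω) ∂μ) - (1 + s ^ 2 / 2)|
        = ‖∫ ω, (Real.exp (s * X ω) - (1 + s * X ω + s ^ 2 / 2 * X ω ^ 2)) ∂μ‖ := by
          rw [hsplit]; rfl
      _ ≤ ∫ ω, |s| ^ 3 * (|X ω| ^ 3 * Real.exp (b * |X ω|)) ∂μ :=
          norm_integral_le_of_norm_le (hbound3.const_mul _)
            (Filter.Eventually.of_forall hpt)
      _ = |s| ^ 3 * M := by rw [integral_const_mul]
      _ = M * |s| ^ 3 := by ring
  -- gaussian side
  have hgauss : ∀ s : ℝ, ∫ ω, Real.exp (s * Z ω) ∂μ' = Real.exp (s ^ 2 / 2) := by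
    intro s
    have : ∫ ω, Real.exp (s * Z ω) ∂μ' = ∫ z, Real.exp (s * z) ∂(Measure.map Z μ') := by
      rw [integral_map hZmeas.aemeasurable
        (Continuous.aestronglyMeasurable (by continuity))]
    rw [this, hZ, integral_exp_gaussian]
  have hkeyZ : ∀ s : ℝ, |s| ≤ 1 → |Real.exp (s ^ 2 / 2) - (1 + s ^ 2 / 2)| ≤ 3 * |s| ^ 3 := by
    intro s hs
    have h1 := exp_taylor2 (s ^ 2 / 2)
    have h2 : |s ^ 2 / 2| = s ^ 2 / 2 := abs_of_nonneg (by positivity)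
    rw [h2] at h1
    have hs2 : s ^ 2 ≤ 1 := by nlinarith [sq_abs s, abs_nonneg s]
    have h3 : Real.exp (s ^ 2 / 2) ≤ Real.exp 1 := Real.exp_le_exp.mpr (by linarith)
    have he : Real.exp 1 < 3 := by
      have := Real.exp_one_lt_d9; linarith
    have h4 : s ^ 4 ≤ |s| ^ 3 := by
      have e : |s| ^ 4 = s ^ 4 := by
        rw [← abs_pow, abs_of_nonneg (by positivity : (0:ℝ) ≤ s ^ 4)]
      calc s ^ 4 = |s| ^ 4 := e.symm
        _ = |s| ^ 3 * |s| := by ring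
        _ ≤ |s| ^ 3 * 1 := mul_le_mul_of_nonneg_left hs (by positivity)
        _ = |s| ^ 3 := mul_one _
    have : Real.exp (s ^ 2 / 2) - 1 - s ^ 2 / 2 = Real.exp (s ^ 2 / 2) - (1 + s ^ 2 / 2) := by ring
    rw [this] at h1
    calc |Real.exp (s ^ 2 / 2) - (1 + s ^ 2 / 2)| ≤ (s ^ 2 / 2) ^ 2 * Real.exp (s ^ 2 / 2) := h1
      _ ≤ (s ^ 2 / 2) ^ 2 * 3 := by nlinarith [sq_nonneg (s ^ 2 / 2)]
      _ = 3 * (s ^ 4 / 4) := by ring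
      _ ≤ 3 * |s| ^ 3 := by nlinarith
  -- pick N
  set δ : ℝ := b / (|t| + 1) with hδdef
  have hδ : 0 < δ := div_pos hb (by positivity)
  have hev : ∀ᶠ n in atTop, a n / Real.sqrt n < δ ∧ 1 ≤ n := by
    filter_upwards [haslow.eventually_lt_const hδ, eventually_ge_atTop 1] with n h1 h2
    exact ⟨h1, h2⟩
  obtain ⟨N, hN⟩ := eventually_atTop.mp hev
  refine ⟨(M + 3) * (|t| ^ 3 + 1), by positivity, N, fun n hn => ?_⟩
  obtain ⟨hlt, hn1⟩ := hN n hn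
  have hsqrt : (0:ℝ) < Real.sqrt n := Real.sqrt_pos.mpr (by exact_mod_cast hn1)
  have hratio : 0 ≤ a n / Real.sqrt n := le_of_lt (div_pos (hapos n) hsqrt)
  set s : ℝ := t * (a n / Real.sqrt n) with hsdef
  have habs : |s| = |t| * (a n / Real.sqrt n) := by
    rw [hsdef, abs_mul, abs_of_nonneg hratio]
  have hsb : |s| ≤ b := by
    rw [habs]
    calc |t| * (a n / Real.sqrt n) ≤ |t| * δ :=
        mul_le_mul_of_nonneg_left (le_of_lt hlt) (abs_nonneg t)
      _ ≤ (|t| + 1) * δ := by nlinarith [abs_nonneg t]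
      _ = b := by rw [hδdef]; field_simp
  have hs1 : |s| ≤ 1 := hsb.trans hb1
  have hbound : |(∫ ω, Real.exp (s * X ω) ∂μ) - ∫ ω, Real.exp (s * Z ω) ∂μ'|
      ≤ (M + 3) * |s| ^ 3 := by
    rw [hgauss s]
    calc |(∫ ω, Real.exp (s * X ω) ∂μ) - Real.exp (s ^ 2 / 2)|
        ≤ |(∫ ω, Real.exp (s * X ω) ∂μ) - (1 + s ^ 2 / 2)|
          + |Real.exp (s ^ 2 / 2) - (1 + s ^ 2 / 2)| := by
          rw [abs_sub_comm (Real.exp (s ^ 2 / 2))]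
          exact abs_sub_le _ _ _
      _ ≤ M * |s| ^ 3 + 3 * |s| ^ 3 := add_le_add (hkey s hsb) (hkeyZ s hs1)
      _ = (M + 3) * |s| ^ 3 := by ring
  have hpow : Real.sqrt n ^ 3 = (n : ℝ) ^ ((3:ℝ) / 2) := by
    rw [Real.sqrt_eq_rpow, ← Real.rpow_natCast ((n:ℝ) ^ ((1:ℝ)/2)) 3,
      ← Real.rpow_mul (Nat.cast_nonneg n)]
    norm_num
  have hcube : |s| ^ 3 = |t| ^ 3 * (a n ^ 3 / (n : ℝ) ^ ((3:ℝ) / 2)) := by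
    rw [habs, mul_pow, div_pow, hpow]
  calc |(∫ ω, Real.exp (s * X ω) ∂μ) - ∫ ω, Real.exp (s * Z ω) ∂μ'|
      ≤ (M + 3) * |s| ^ 3 := hbound
    _ = (M + 3) * |t| ^ 3 * (a n ^ 3 / (n : ℝ) ^ ((3:ℝ) / 2)) := by rw [hcube]; ring
    _ ≤ (M + 3) * (|t| ^ 3 + 1) * (a n ^ 3 / (n : ℝ) ^ ((3:ℝ) / 2)) := by
        apply mul_le_mul_of_nonneg_right _
          (div_nonneg (pow_nonneg (hapos n).le 3) (Real.rpow_nonneg (Nat.cast_nonneg n) _))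
        nlinarith [abs_nonneg t, pow_nonneg (abs_nonneg t) 3]
    _ = (M + 3) * (|t| ^ 3 + 1) * a n ^ 3 / (n : ℝ) ^ ((3:ℝ) / 2) := by ring
end
end
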